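/- arXiv:2010.06956 — 3 statements merged into one kernel-verified Lean document; each statement's English description precedes it below -/
import Mathlib

section
/- Suppose f ∈ Sym ℝ⟨X⟩ is quadratic, i.e., deg(f) = 2. Then the first step of the term-sparsity hierarchy is already exact: λ_1(f) = λ_min(f). Equivalently, with monomial basis B = {1, X_1, …, X_n} and G_0 the tsp graph of f, if f admits a positive semidefinite Gram matrix indexed by B, then f admits a positive semidefinite Gram matrix lying in S_+^{n+1} ∩ S_{G_0}. -/
open scoped Classical BigOperators RealInnerProductSpace

noncomputable section

/-- Words in `n` noncommuting letters `X_1, …, X_n`. -/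
abbrev Word (n : ℕ) := List (Fin n)

/-- The involution `⋆` on words: it fixes the letters pointwise and reverses words. -/
def wstar {n : ℕ} (w : Word n) : Word n := w.reverse

/-- Noncommutative polynomials with real coefficients in `n` noncommuting letters,
represented as finitely supported coefficient functions on words. -/
abbrev NCPoly (n : ℕ) := Word n →₀ ℝ

/-- The involution `⋆` on nc polynomials. -/
def ncStar {n : ℕ} (f : NCPoly n) : NCPoly n :=
  Finsupp.equivMapDomain
    ⟨wstar, wstar, fun w => List.reverse_reverse w, fun w => List.reverse_reverse w⟩ f

/-- `f ∈ Sym ℝ⟨X⟩`, i.e. `f⋆ = f`. -/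
def IsSymNC {n : ℕ} (f : NCPoly n) : Prop := ncStar f = f

/-- The degree of an nc polynomial: the length of the longest word in its support. -/
def ncDeg {n : ℕ} (f : NCPoly n) : ℕ := f.support.sup List.length

/-- `⌈k/2⌉`. -/
def ceilHalf (k : ℕ) : ℕ := (k + 1) / 2

/-- The Riesz functional `L_y` associated with a moment sequence `y`. -/
def Ly {n : ℕ} (y : Word n → ℝ) (f : NCPoly n) : ℝ := f.sum fun w a => a * y w

/-- Words of length exactly `k`. -/
def wordsLen (n : ℕ) : ℕ → Finset (Word n)
  | 0 => {([] : Word n)}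
  | k + 1 => ((Finset.univ : Finset (Fin n)) ×ˢ wordsLen n k).image fun p => p.1 :: p.2

/-- `W_d`: the words of degree at most `d`. -/
def Wd (n d : ℕ) : Finset (Word n) := (Finset.range (d + 1)).biUnion (wordsLen n)

/-- `B² = {u⋆u : u ∈ B}`. -/
def Bsq {n : ℕ} (B : Finset (Word n)) : Set (Word n) := {w | ∃ u ∈ B, w = wstar u ++ u}

/-- The localizing matrix `M(g y)` indexed by the word set `B`,
with entries `L_y(u⋆ g v)`.  For `g = 1` this is the moment matrix. -/
def locMat {n : ℕ} (B : Finset (Word n)) (g : NCPoly n) (y : Word n → ℝ) :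
    Matrix ↥B ↥B ℝ := fun u v => g.sum fun w a => a * y (wstar u.1 ++ w ++ v.1)

/-- The moment matrix `M_B(y)`, with entries `y_{u⋆v}`. -/
def momMat {n : ℕ} (B : Finset (Word n)) (y : Word n → ℝ) : Matrix ↥B ↥B ℝ :=
  fun u v => y (wstar u.1 ++ v.1)

/-- `B_G ∘ M ∈ Π_G(𝕊₊)` : the partial matrix given by the entries of `M` on the diagonal and on
the edges of `G` admits a positive semidefinite completion. -/
def Completable {n : ℕ} (B : Finset (Word n)) (G : SimpleGraph (Word n))
    (M : Matrix ↥B ↥B ℝ) : Prop :=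
  ∃ P : Matrix ↥B ↥B ℝ, P.PosSemidef ∧ ∀ u v : ↥B, (u = v ∨ G.Adj u.1 v.1) → P u v = M u v

/-- `Q ∈ 𝕊_G` : `Q` vanishes on non-edges off the diagonal. -/
def SparsityPattern {n : ℕ} (B : Finset (Word n)) (G : SimpleGraph (Word n))
    (Q : Matrix ↥B ↥B ℝ) : Prop :=
  ∀ u v : ↥B, ¬(u = v ∨ G.Adj u.1 v.1) → Q u v = 0

/-- The support of a graph with word nodes: `supp(G) = {u⋆v : {u,v} ∈ E(G)}`. -/
def gsupp {n : ℕ} (G : SimpleGraph (Word n)) : Set (Word n) :=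
  {w | ∃ u v, G.Adj u v ∧ w = wstar u ++ v}

/-- `supp_g(G) = {u⋆wv : {u,v} ∈ E(G), w ∈ supp(g)}`. -/
def gsuppP {n : ℕ} (g : NCPoly n) (G : SimpleGraph (Word n)) : Set (Word n) :=
  {s | ∃ u v w, G.Adj u v ∧ w ∈ g.support ∧ s = wstar u ++ w ++ v}

/-- A graph has all its edges inside the node set `V`. -/
def EdgesIn {n : ℕ} (V : Finset (Word n)) (G : SimpleGraph (Word n)) : Prop :=
  ∀ u v, G.Adj u v → u ∈ V ∧ v ∈ V

/-- Cyclic successor on `Fin m`. -/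
def cycSucc {m : ℕ} (hm : 0 < m) (i : Fin m) : Fin m := ⟨(i.1 + 1) % m, Nat.mod_lt _ hm⟩

/-- A graph is chordal if every cycle of length at least 4 has a chord. -/
def IsChordal {V : Type*} (G : SimpleGraph V) : Prop :=
  ∀ (m : ℕ) (hm : 4 ≤ m) (c : Fin m → V), Function.Injective c →
    (∀ i, G.Adj (c i) (c (cycSucc (by omega) i))) →
      ∃ i j, G.Adj (c i) (c j) ∧ cycSucc (by omega) i ≠ j ∧ cycSucc (by omega) j ≠ i

/-- The maximal chordal extension: the chordal extension completing every connected component. -/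
def maxCE {n : ℕ} (G : SimpleGraph (Word n)) : SimpleGraph (Word n) where
  Adj u v := u ≠ v ∧ G.Reachable u v
  symm := ⟨fun _ _ h => ⟨h.1.symm, h.2.symm⟩⟩
  loopless := ⟨fun _ h => h.1 rfl⟩

/-- An abstract chordal-extension operation `G ↦ Ḡ` on graphs with nodes inside a finite word
set: it contains the original graph, returns chordal graphs on the same node set, and is
monotone (`G ⊆ H ⟹ Ḡ ⊆ H̄`, also with respect to enlarging the node set). -/
structure ChordalExt (n : ℕ) where
  ce : Finset (Word n) → SimpleGraph (Word n) → SimpleGraph (Word n)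
  le_ce : ∀ V G, G ≤ ce V G
  chordal : ∀ V G, IsChordal (ce V G)
  edges_in : ∀ V G, EdgesIn V G → EdgesIn V (ce V G)
  mono : ∀ V V' G H, V ⊆ V' → G ≤ H → ce V G ≤ ce V' H

/-- Evaluation of an nc polynomial at a tuple of elements of an ℝ-algebra. -/
def evalNC {n : ℕ} {R : Type*} [Ring R] [Algebra ℝ R] (f : NCPoly n) (A : Fin n → R) : R :=
  f.sum fun w a => a • (w.map A).prod

/-- `λ_min(f)`: the smallest eigenvalue that `f` attains on tuples of real symmetric matrices,
`λ_min(f) = inf{⟨f(A)v, v⟩ : A ∈ (𝕊^r)^n, r ∈ ℕ∖{0}, ‖v‖ = 1}`. -/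
def lambdaMin {n : ℕ} (f : NCPoly n) : ℝ :=
  sInf {c | ∃ (r : ℕ) (A : Fin n → Matrix (Fin (r + 1)) (Fin (r + 1)) ℝ)
      (v : Fin (r + 1) → ℝ),
    (∀ i, (A i).IsSymm) ∧ (∑ i, v i ^ 2) = 1 ∧
      c = dotProduct v ((evalNC f A).mulVec v)}

/-- The constant polynomial `1`. -/
def ncOne {n : ℕ} : NCPoly n := Finsupp.single [] 1

/-! ### Term sparsity for unconstrained eigenvalue optimization -/

/-- The support-extension operation `SE(G)` relative to the monomial basis `B`:
`u ≠ v` are joined whenever `u⋆v ∈ supp(G) ∪ B²`. -/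
def SE {n : ℕ} (B : Finset (Word n)) (G : SimpleGraph (Word n)) : SimpleGraph (Word n) :=
  SimpleGraph.fromRel fun u v => u ∈ B ∧ v ∈ B ∧ wstar u ++ v ∈ gsupp G ∪ Bsq B

/-- The term sparsity pattern (tsp) graph `G₀` of `f` with node set `B`:
`u ≠ v` are joined whenever `u⋆v ∈ supp(f) ∪ B²`. -/
def tspU {n : ℕ} (B : Finset (Word n)) (f : NCPoly n) : SimpleGraph (Word n) :=
  SimpleGraph.fromRel fun u v =>
    u ∈ B ∧ v ∈ B ∧ wstar u ++ v ∈ (↑f.support : Set (Word n)) ∪ Bsq B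

/-- The term-sparsity graph sequence `(G_k)`: alternate support extension and
chordal extension starting from the tsp graph. -/
def GseqU {n : ℕ} (E : ChordalExt n) (B : Finset (Word n)) (f : NCPoly n) :
    ℕ → SimpleGraph (Word n)
  | 0 => tspU B f
  | k + 1 => E.ce B (SE B (GseqU E B f k))

/-- The term-sparsity graph sequence built with the maximal chordal extension. -/
def GseqUMax {n : ℕ} (B : Finset (Word n)) (f : NCPoly n) : ℕ → SimpleGraph (Word n)
  | 0 => tspU B f
  | k + 1 => maxCE (SE B (GseqUMax B f k))

/-- The optimal value `λ_k(f)` of the sparse moment relaxation `(EP^k)` associated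
to the graph `G`. -/
def epVal {n : ℕ} (B : Finset (Word n)) (G : SimpleGraph (Word n)) (f : NCPoly n) : ℝ :=
  sInf {r | ∃ y : Word n → ℝ, r = Ly y f ∧ y [] = 1 ∧ Completable B G (momMat B y)}

/-- The optimal value of the dense moment relaxation `(EP)`. -/
def epDenseVal {n : ℕ} (B : Finset (Word n)) (f : NCPoly n) : ℝ :=
  sInf {r | ∃ y : Word n → ℝ, r = Ly y f ∧ y [] = 1 ∧ (momMat B y).PosSemidef}

/-- `⟨Q, D_w⟩` where `M(g y) = Σ_w D_w y_w`: the coefficient pairing appearing in the dual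
SOHS relaxations. -/
def pairingD {n : ℕ} (B : Finset (Word n)) (g : NCPoly n) (Q : Matrix ↥B ↥B ℝ)
    (w : Word n) : ℝ :=
  ∑ u : ↥B, ∑ v : ↥B, (g.sum fun s a => if wstar u.1 ++ s ++ v.1 = w then a else 0) * Q u v

/-- The optimal value of the dual sparse SOHS relaxation `(EP^k)*` associated to `G`. -/
def epDualVal {n : ℕ} (B : Finset (Word n)) (G : SimpleGraph (Word n)) (f : NCPoly n) : ℝ :=
  sSup {l | ∃ Q : Matrix ↥B ↥B ℝ, Q.PosSemidef ∧ SparsityPattern B G Q ∧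
    ∀ w ∈ gsupp G ∪ Bsq B,
      pairingD B ncOne Q w + (if w = ([] : Word n) then l else 0) = f w}

/-- The monomial basis `{1, X_1, …, X_n}`. -/
def quadBasis (n : ℕ) : Finset (Word n) :=
  insert ([] : Word n) ((Finset.univ : Finset (Fin n)).image fun i => ([i] : Word n))

/-! ### Term sparsity for constrained eigenvalue optimization -/

/-- `g_0 = 1, g_1, …, g_m`. -/
def gAug {n m : ℕ} (g : Fin m → NCPoly n) : Fin (m + 1) → NCPoly n :=
  Fin.cases ncOne g

/-- `d_0 = 0, d_j = ⌈deg(g_j)/2⌉`. -/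
def dAug {n m : ℕ} (g : Fin m → NCPoly n) : Fin (m + 1) → ℕ :=
  Fin.cases 0 fun j => ceilHalf (ncDeg (g j))

/-- `d = max{⌈deg f/2⌉, d_1, …, d_m}`: the minimal relaxation order. -/
def minOrder {n m : ℕ} (f : NCPoly n) (g : Fin m → NCPoly n) : ℕ :=
  max (ceilHalf (ncDeg f)) (Finset.univ.sup fun j : Fin m => ceilHalf (ncDeg (g j)))

/-- `A = supp(f) ∪ ⋃_j supp(g_j)`. -/
def Asupp {n m : ℕ} (f : NCPoly n) (g : Fin m → NCPoly n) : Set (Word n) :=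
  (↑f.support : Set (Word n)) ∪ ⋃ j : Fin m, (↑(g j).support : Set (Word n))

/-- The tsp graph `G_d̂^tsp` associated with `f` and `S = {g_1,…,g_m}`:
nodes `W_d̂`, and `u ≠ v` joined whenever `u⋆v ∈ A ∪ W_d̂²`. -/
def tspC {n m : ℕ} (f : NCPoly n) (g : Fin m → NCPoly n) (dh : ℕ) : SimpleGraph (Word n) :=
  SimpleGraph.fromRel fun u v =>
    u ∈ Wd n dh ∧ v ∈ Wd n dh ∧ wstar u ++ v ∈ Asupp f g ∪ Bsq (Wd n dh)

/-- The term-sparsity graph sequence `(G_{d̂,j}^{(k)})` for constrained eigenvalue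
optimization: alternate support extension and chordal extension. -/
def GseqC {n m : ℕ} (E : ChordalExt n) (f : NCPoly n) (g : Fin m → NCPoly n) (dh : ℕ) :
    ℕ → Fin (m + 1) → SimpleGraph (Word n)
  | 0 => Fin.cases (tspC f g dh) fun _ => (⊥ : SimpleGraph (Word n))
  | k + 1 => fun j =>
      E.ce (Wd n (dh - dAug g j)) <| SimpleGraph.fromRel fun u v =>
        u ∈ Wd n (dh - dAug g j) ∧ v ∈ Wd n (dh - dAug g j) ∧
          ∃ w ∈ (gAug g j).support,
            wstar u ++ w ++ v ∈
              (⋃ j' : Fin (m + 1), gsuppP (gAug g j') (GseqC E f g dh k j')) ∪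
                Bsq (Wd n dh)

/-- The same sequence built with the maximal chordal extension. -/
def GseqCMax {n m : ℕ} (f : NCPoly n) (g : Fin m → NCPoly n) (dh : ℕ) :
    ℕ → Fin (m + 1) → SimpleGraph (Word n)
  | 0 => Fin.cases (tspC f g dh) fun _ => (⊥ : SimpleGraph (Word n))
  | k + 1 => fun j =>
      maxCE <| SimpleGraph.fromRel fun u v =>
        u ∈ Wd n (dh - dAug g j) ∧ v ∈ Wd n (dh - dAug g j) ∧
          ∃ w ∈ (gAug g j).support,
            wstar u ++ w ++ v ∈
              (⋃ j' : Fin (m + 1), gsuppP (gAug g j') (GseqCMax f g dh k j')) ∪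
                Bsq (Wd n dh)

/-- The optimal value `λ_{d̂,k}^{ts}(f,S)` of the sparse moment relaxation `(EQ_{d̂,k}^{ts})`
associated to the family of graphs `GG`. -/
def eqTsValG {n m : ℕ} (f : NCPoly n) (g : Fin m → NCPoly n) (dh : ℕ)
    (GG : Fin (m + 1) → SimpleGraph (Word n)) : ℝ :=
  sInf {r | ∃ y : Word n → ℝ, r = Ly y f ∧ y [] = 1 ∧
    ∀ j : Fin (m + 1),
      Completable (Wd n (dh - dAug g j)) (GG j)
        (locMat (Wd n (dh - dAug g j)) (gAug g j) y)}

/-- The optimal value `λ_{d̂}(f,S)` of the dense moment relaxation `(EQ_{d̂})`. -/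
def eqDenseVal {n m : ℕ} (f : NCPoly n) (g : Fin m → NCPoly n) (dh : ℕ) : ℝ :=
  sInf {r | ∃ y : Word n → ℝ, r = Ly y f ∧ y [] = 1 ∧
    ∀ j : Fin (m + 1), (locMat (Wd n (dh - dAug g j)) (gAug g j) y).PosSemidef}

/-- The optimal value of the dual sparse SOHS relaxation `(EQ_{d̂,k}^{ts})*`. -/
def eqTsDualValG {n m : ℕ} (f : NCPoly n) (g : Fin m → NCPoly n) (dh : ℕ)
    (GG : Fin (m + 1) → SimpleGraph (Word n)) : ℝ :=
  sSup {l | ∃ Q : ∀ j : Fin (m + 1),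
      Matrix ↥(Wd n (dh - dAug g j)) ↥(Wd n (dh - dAug g j)) ℝ,
    (∀ j, (Q j).PosSemidef) ∧
    (∀ j, SparsityPattern (Wd n (dh - dAug g j)) (GG j) (Q j)) ∧
    ∀ w ∈ (⋃ j : Fin (m + 1), gsuppP (gAug g j) (GG j)) ∪ Bsq (Wd n dh),
      (∑ j : Fin (m + 1), pairingD (Wd n (dh - dAug g j)) (gAug g j) (Q j) w)
        + (if w = ([] : Word n) then l else 0) = f w}

/-- The ball polynomial `R² − Σ_i X_i²`. -/
def ballPoly (n : ℕ) (R : ℝ) : NCPoly n :=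
  Finsupp.single [] (R ^ 2) - ∑ i : Fin n, Finsupp.single [i, i] (1 : ℝ)

/-- A point of the operator semialgebraic set `D_S^∞`: a tuple of bounded self-adjoint
operators on a real Hilbert space making all `g_j(A)` positive semidefinite. -/
structure OpFeasPoint (n m : ℕ) (g : Fin m → NCPoly n) where
  H : Type
  [grp : NormedAddCommGroup H]
  [ip : InnerProductSpace ℝ H]
  [cpl : CompleteSpace H]
  A : Fin n → H →L[ℝ] H
  selfAdj : ∀ i, IsSelfAdjoint (A i)
  posOp : ∀ (j : Fin m) (x : H), 0 ≤ (inner ℝ ((evalNC (g j) A) x) x : ℝ)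

/-- Feasibility of the semialgebraic set `D_S` (on tuples of symmetric matrices). -/
def MatFeasible {n m : ℕ} (g : Fin m → NCPoly n) : Prop :=
  ∃ (r : ℕ) (A : Fin n → Matrix (Fin (r + 1)) (Fin (r + 1)) ℝ),
    (∀ i, (A i).IsSymm) ∧ ∀ j, (evalNC (g j) A).PosSemidef

/-! ### Combined correlative-term sparsity (eigenvalue optimization) -/

/-- Words of degree ≤ d in the variables `X(I_l)`. -/
def WdL (n d : ℕ) (Il : Finset (Fin n)) : Finset (Word n) :=
  (Wd n d).filter fun w => ∀ i ∈ w, i ∈ Il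

/-- Index set for the blocks of the combined correlative-term sparsity relaxations:
`Sum.inl l` indexes the moment block of the clique `I_l` (i.e. `j = 0`), and `Sum.inr j`
indexes the localizing block of the constraint `g_j` (belonging to the clique `I_{l(j)}`). -/
abbrev CIdx (p m : ℕ) := Fin p ⊕ Fin m

/-- The node set (monomial basis) of each block. -/
def csNode {n m p : ℕ} (g : Fin m → NCPoly n) (I : Fin p → Finset (Fin n))
    (asg : Fin m → Fin p) (dh : ℕ) : CIdx p m → Finset (Word n)
  | .inl l => WdL n dh (I l)
  | .inr j => WdL n (dh - ceilHalf (ncDeg (g j))) (I (asg j))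

/-- The polynomial attached to each block (`1` for moment blocks, `g_j` for localizing
blocks). -/
def csPoly {n m p : ℕ} (g : Fin m → NCPoly n) : CIdx p m → NCPoly n
  | .inl _ => ncOne
  | .inr j => g j

/-- `A_l = {w ∈ A : var(w) ⊆ X(I_l)}`. -/
def AsuppL {n m : ℕ} (f : NCPoly n) (g : Fin m → NCPoly n) (Il : Finset (Fin n)) :
    Set (Word n) := {w | w ∈ Asupp f g ∧ ∀ i ∈ w, i ∈ Il}

/-- The per-clique tsp graph `G_{d̂,l}^{tsp}` with nodes `W_{d̂,l}` associated with `A_l`. -/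
def tspCS {n m p : ℕ} (f : NCPoly n) (g : Fin m → NCPoly n) (I : Fin p → Finset (Fin n))
    (dh : ℕ) (l : Fin p) : SimpleGraph (Word n) :=
  SimpleGraph.fromRel fun u v =>
    u ∈ WdL n dh (I l) ∧ v ∈ WdL n dh (I l) ∧
      wstar u ++ v ∈ AsuppL f g (I l) ∪ Bsq (WdL n dh (I l))

/-- The combined correlative-term sparsity graph sequence `(G_{d̂,l,j}^{(k)})`. -/
def GseqCS {n m p : ℕ} (E : ChordalExt n) (f : NCPoly n) (g : Fin m → NCPoly n)
    (I : Fin p → Finset (Fin n)) (asg : Fin m → Fin p) (dh : ℕ) :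
    ℕ → CIdx p m → SimpleGraph (Word n)
  | 0 => Sum.elim (fun l => tspCS f g I dh l) (fun _ => (⊥ : SimpleGraph (Word n)))
  | k + 1 => fun t =>
      E.ce (csNode g I asg dh t) <| SimpleGraph.fromRel fun u v =>
        u ∈ csNode g I asg dh t ∧ v ∈ csNode g I asg dh t ∧
          ∃ w ∈ (csPoly g t).support,
            wstar u ++ w ++ v ∈
              (⋃ t' : CIdx p m, gsuppP (csPoly g t') (GseqCS E f g I asg dh k t')) ∪
                Bsq (Wd n dh)

/-- The same sequence built with the maximal chordal extension. -/
def GseqCSMax {n m p : ℕ} (f : NCPoly n) (g : Fin m → NCPoly n)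
    (I : Fin p → Finset (Fin n)) (asg : Fin m → Fin p) (dh : ℕ) :
    ℕ → CIdx p m → SimpleGraph (Word n)
  | 0 => Sum.elim (fun l => tspCS f g I dh l) (fun _ => (⊥ : SimpleGraph (Word n)))
  | k + 1 => fun t =>
      maxCE <| SimpleGraph.fromRel fun u v =>
        u ∈ csNode g I asg dh t ∧ v ∈ csNode g I asg dh t ∧
          ∃ w ∈ (csPoly g t).support,
            wstar u ++ w ++ v ∈
              (⋃ t' : CIdx p m, gsuppP (csPoly g t') (GseqCSMax f g I asg dh k t')) ∪
                Bsq (Wd n dh)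

/-- The optimal value `λ_{d̂,k}^{cs-ts}(f,S)` of `(EQ_{d̂,k}^{cs-ts})` associated to the family
of graphs `GG`. -/
def csTsValG {n m p : ℕ} (f : NCPoly n) (g : Fin m → NCPoly n) (I : Fin p → Finset (Fin n))
    (asg : Fin m → Fin p) (dh : ℕ) (GG : CIdx p m → SimpleGraph (Word n)) : ℝ :=
  sInf {r | ∃ y : Word n → ℝ, r = Ly y f ∧ y [] = 1 ∧
    ∀ t : CIdx p m,
      Completable (csNode g I asg dh t) (GG t) (locMat (csNode g I asg dh t) (csPoly g t) y)}

/-- The optimal value `λ_{d̂}^{cs}(f,S)` of the correlative-sparsity relaxation `(EQ_{d̂}^{cs})`. -/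
def csVal {n m p : ℕ} (f : NCPoly n) (g : Fin m → NCPoly n) (I : Fin p → Finset (Fin n))
    (asg : Fin m → Fin p) (dh : ℕ) : ℝ :=
  sInf {r | ∃ y : Word n → ℝ, r = Ly y f ∧ y [] = 1 ∧
    ∀ t : CIdx p m, (locMat (csNode g I asg dh t) (csPoly g t) y).PosSemidef}

/-! ### Trace optimization: cyclic equivalence -/

/-- Two words are cyclically equivalent iff one is a cyclic rotation of the other. -/
def cycEq {n : ℕ} (u v : Word n) : Prop := ∃ k, u = v.rotate k

/-- The (finite) cyclic equivalence class of a word. -/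
def rotClass {n : ℕ} (v : Word n) : Finset (Word n) :=
  (Finset.range (v.length + 1)).image fun k => v.rotate k

/-- The cyclic degree `cdeg(f) = deg([f])` of an nc polynomial. -/
def ncCdeg {n : ℕ} (f : NCPoly n) : ℕ :=
  (f.support.filter fun w => (∑ w' ∈ rotClass w, f w') ≠ 0).sup List.length

/-- `d = max{⌈cdeg f/2⌉, d_1, …, d_m}`: the minimal relaxation order for trace optimization. -/
def minOrderT {n m : ℕ} (f : NCPoly n) (g : Fin m → NCPoly n) : ℕ :=
  max (ceilHalf (ncCdeg f)) (Finset.univ.sup fun j : Fin m => ceilHalf (ncDeg (g j)))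

/-- The cyclic tsp graph `H_d̂^tsp`: nodes `W_d̂`, and `u ≠ v` joined whenever
`[u⋆v] ∈ [A ∪ W_d̂²]`. -/
def tspT {n m : ℕ} (f : NCPoly n) (g : Fin m → NCPoly n) (dh : ℕ) : SimpleGraph (Word n) :=
  SimpleGraph.fromRel fun u v =>
    u ∈ Wd n dh ∧ v ∈ Wd n dh ∧
      ∃ s ∈ Asupp f g ∪ Bsq (Wd n dh), cycEq (wstar u ++ v) s

/-- The cyclic term-sparsity graph sequence `(H_{d̂,j}^{(k)})`: alternate cyclic support
extension and chordal extension. -/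
def GseqT {n m : ℕ} (E : ChordalExt n) (f : NCPoly n) (g : Fin m → NCPoly n) (dh : ℕ) :
    ℕ → Fin (m + 1) → SimpleGraph (Word n)
  | 0 => Fin.cases (tspT f g dh) fun _ => (⊥ : SimpleGraph (Word n))
  | k + 1 => fun j =>
      E.ce (Wd n (dh - dAug g j)) <| SimpleGraph.fromRel fun u v =>
        u ∈ Wd n (dh - dAug g j) ∧ v ∈ Wd n (dh - dAug g j) ∧
          ∃ w ∈ (gAug g j).support,
            ∃ s ∈ (⋃ j' : Fin (m + 1), gsuppP (gAug g j') (GseqT E f g dh k j')) ∪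
                Bsq (Wd n dh),
              cycEq (wstar u ++ w ++ v) s

/-- The same sequence built with the maximal chordal extension. -/
def GseqTMax {n m : ℕ} (f : NCPoly n) (g : Fin m → NCPoly n) (dh : ℕ) :
    ℕ → Fin (m + 1) → SimpleGraph (Word n)
  | 0 => Fin.cases (tspT f g dh) fun _ => (⊥ : SimpleGraph (Word n))
  | k + 1 => fun j =>
      maxCE <| SimpleGraph.fromRel fun u v =>
        u ∈ Wd n (dh - dAug g j) ∧ v ∈ Wd n (dh - dAug g j) ∧
          ∃ w ∈ (gAug g j).support,
            ∃ s ∈ (⋃ j' : Fin (m + 1), gsuppP (gAug g j') (GseqTMax f g dh k j')) ∪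
                Bsq (Wd n dh),
              cycEq (wstar u ++ w ++ v) s

/-- The entry of the Hadamard product `B_H ∘ M(y)` at `(u,v)`. -/
def hadEntry {n : ℕ} (H : SimpleGraph (Word n)) (y : Word n → ℝ) (u v : Word n) : ℝ :=
  if u = v ∨ H.Adj u v then y (wstar u ++ v) else 0

/-- The tracial constraint `[B_H ∘ M(y)]_{uv} = [B_H ∘ M(y)]_{wz}` for all `u⋆v ∼cyc w⋆z`,
on the node set `W`. -/
def CycConstraint {n : ℕ} (W : Finset (Word n)) (H : SimpleGraph (Word n))
    (y : Word n → ℝ) : Prop :=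
  ∀ u v w z : Word n, u ∈ W → v ∈ W → w ∈ W → z ∈ W →
    cycEq (wstar u ++ v) (wstar w ++ z) → hadEntry H y u v = hadEntry H y w z

/-- The optimal value `μ_{d̂,k}^{ts}(f,S)` of the sparse tracial moment relaxation
`(TQ_{d̂,k}^{ts})` associated to the family of graphs `GG`. -/
def tqTsValG {n m : ℕ} (f : NCPoly n) (g : Fin m → NCPoly n) (dh : ℕ)
    (GG : Fin (m + 1) → SimpleGraph (Word n)) : ℝ :=
  sInf {r | ∃ y : Word n → ℝ, r = Ly y f ∧ y [] = 1 ∧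
    (∀ j : Fin (m + 1),
      Completable (Wd n (dh - dAug g j)) (GG j)
        (locMat (Wd n (dh - dAug g j)) (gAug g j) y)) ∧
    CycConstraint (Wd n dh) (GG 0) y}

/-- The optimal value `μ_{d̂}(f,S)` of the dense tracial moment relaxation `(TQ_{d̂})`. -/
def tqDenseVal {n m : ℕ} (f : NCPoly n) (g : Fin m → NCPoly n) (dh : ℕ) : ℝ :=
  sInf {r | ∃ y : Word n → ℝ, r = Ly y f ∧ y [] = 1 ∧
    (∀ j : Fin (m + 1), (locMat (Wd n (dh - dAug g j)) (gAug g j) y).PosSemidef) ∧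
    ∀ u v w z : Word n, u ∈ Wd n dh → v ∈ Wd n dh → w ∈ Wd n dh → z ∈ Wd n dh →
      cycEq (wstar u ++ v) (wstar w ++ z) → y (wstar u ++ v) = y (wstar w ++ z)}

/-- The optimal value of the dual sparse tracial SOHS relaxation `(TQ_{d̂,k}^{ts})*`. -/
def tqTsDualValG {n m : ℕ} (f : NCPoly n) (g : Fin m → NCPoly n) (dh : ℕ)
    (GG : Fin (m + 1) → SimpleGraph (Word n)) : ℝ :=
  sSup {l | ∃ Q : ∀ j : Fin (m + 1),
      Matrix ↥(Wd n (dh - dAug g j)) ↥(Wd n (dh - dAug g j)) ℝ,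
    (∀ j, (Q j).PosSemidef) ∧
    (∀ j, SparsityPattern (Wd n (dh - dAug g j)) (GG j) (Q j)) ∧
    ∀ v : Word n,
      (∃ s ∈ (⋃ j : Fin (m + 1), gsuppP (gAug g j) (GG j)) ∪ Bsq (Wd n dh), cycEq v s) →
        (∑ w ∈ rotClass v,
          ((∑ j : Fin (m + 1), pairingD (Wd n (dh - dAug g j)) (gAug g j) (Q j) w)
            + (if w = ([] : Word n) then l else 0)))
          = ∑ w ∈ rotClass v, f w}

/-! ### Combined correlative-term sparsity (trace optimization) -/

/-- The per-clique cyclic tsp graph `H_{d̂,l}^{tsp}`. -/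
def tspTCS {n m p : ℕ} (f : NCPoly n) (g : Fin m → NCPoly n) (I : Fin p → Finset (Fin n))
    (dh : ℕ) (l : Fin p) : SimpleGraph (Word n) :=
  SimpleGraph.fromRel fun u v =>
    u ∈ WdL n dh (I l) ∧ v ∈ WdL n dh (I l) ∧
      ∃ s ∈ AsuppL f g (I l) ∪ Bsq (WdL n dh (I l)), cycEq (wstar u ++ v) s

/-- The combined correlative-term sparsity cyclic graph sequence `(H_{d̂,l,j}^{(k)})`. -/
def GseqTCS {n m p : ℕ} (E : ChordalExt n) (f : NCPoly n) (g : Fin m → NCPoly n)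
    (I : Fin p → Finset (Fin n)) (asg : Fin m → Fin p) (dh : ℕ) :
    ℕ → CIdx p m → SimpleGraph (Word n)
  | 0 => Sum.elim (fun l => tspTCS f g I dh l) (fun _ => (⊥ : SimpleGraph (Word n)))
  | k + 1 => fun t =>
      E.ce (csNode g I asg dh t) <| SimpleGraph.fromRel fun u v =>
        u ∈ csNode g I asg dh t ∧ v ∈ csNode g I asg dh t ∧
          ∃ w ∈ (csPoly g t).support,
            ∃ s ∈ (⋃ t' : CIdx p m, gsuppP (csPoly g t') (GseqTCS E f g I asg dh k t')) ∪
                Bsq (Wd n dh),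
              cycEq (wstar u ++ w ++ v) s

/-- The same sequence built with the maximal chordal extension. -/
def GseqTCSMax {n m p : ℕ} (f : NCPoly n) (g : Fin m → NCPoly n)
    (I : Fin p → Finset (Fin n)) (asg : Fin m → Fin p) (dh : ℕ) :
    ℕ → CIdx p m → SimpleGraph (Word n)
  | 0 => Sum.elim (fun l => tspTCS f g I dh l) (fun _ => (⊥ : SimpleGraph (Word n)))
  | k + 1 => fun t =>
      maxCE <| SimpleGraph.fromRel fun u v =>
        u ∈ csNode g I asg dh t ∧ v ∈ csNode g I asg dh t ∧
          ∃ w ∈ (csPoly g t).support,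
            ∃ s ∈ (⋃ t' : CIdx p m, gsuppP (csPoly g t') (GseqTCSMax f g I asg dh k t')) ∪
                Bsq (Wd n dh),
              cycEq (wstar u ++ w ++ v) s

/-- The optimal value `μ_{d̂,k}^{cs-ts}(f,S)` of `(TQ_{d̂,k}^{cs-ts})` associated to the family
of graphs `GG`. -/
def tqCsTsValG {n m p : ℕ} (f : NCPoly n) (g : Fin m → NCPoly n)
    (I : Fin p → Finset (Fin n)) (asg : Fin m → Fin p) (dh : ℕ)
    (GG : CIdx p m → SimpleGraph (Word n)) : ℝ :=
  sInf {r | ∃ y : Word n → ℝ, r = Ly y f ∧ y [] = 1 ∧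
    (∀ t : CIdx p m,
      Completable (csNode g I asg dh t) (GG t)
        (locMat (csNode g I asg dh t) (csPoly g t) y)) ∧
    ∀ l : Fin p, CycConstraint (WdL n dh (I l)) (GG (Sum.inl l)) y}

/-- The optimal value `μ_{d̂}^{cs}(f,S)` of the correlative-sparsity tracial relaxation. -/
def tqCsVal {n m p : ℕ} (f : NCPoly n) (g : Fin m → NCPoly n) (I : Fin p → Finset (Fin n))
    (asg : Fin m → Fin p) (dh : ℕ) : ℝ :=
  sInf {r | ∃ y : Word n → ℝ, r = Ly y f ∧ y [] = 1 ∧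
    (∀ t : CIdx p m, (locMat (csNode g I asg dh t) (csPoly g t) y).PosSemidef) ∧
    ∀ l : Fin p, ∀ u v w z : Word n, u ∈ WdL n dh (I l) → v ∈ WdL n dh (I l) →
      w ∈ WdL n dh (I l) → z ∈ WdL n dh (I l) →
        cycEq (wstar u ++ v) (wstar w ++ z) → y (wstar u ++ v) = y (wstar w ++ z)}

/-- `supp(G) ∪ W²` as a finite word set, for a graph `G` with nodes in `W`. -/
def suppUnionSq {n : ℕ} (W : Finset (Word n)) (G : SimpleGraph (Word n)) :
    Finset (Word n) :=
  ((W ×ˢ W).filter fun p => G.Adj p.1 p.2 ∨ p.1 = p.2).image fun p => wstar p.1 ++ p.2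

section Stmt3Aux

open Matrix
variable {n : ℕ}

lemma mem_quadBasis {w : Word n} : w ∈ quadBasis n ↔ w = [] ∨ ∃ i, w = [i] := by
  constructor
  · intro h
    rcases Finset.mem_insert.mp h with h | h
    · exact Or.inl h
    · rcases Finset.mem_image.mp h with ⟨i, _, hi⟩
      exact Or.inr ⟨i, hi.symm⟩
  · rintro (rfl | ⟨i, rfl⟩)
    · exact Finset.mem_insert_self _ _
    · exact Finset.mem_insert_of_mem (Finset.mem_image.mpr ⟨i, Finset.mem_univ _, rfl⟩)

/-- The canonical parametrization of the quadratic basis. -/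
def qbE (n : ℕ) : Option (Fin n) ≃ ↥(quadBasis n) where
  toFun o :=
    match o with
    | none => ⟨[], mem_quadBasis.mpr (Or.inl rfl)⟩
    | some i => ⟨[i], mem_quadBasis.mpr (Or.inr ⟨i, rfl⟩)⟩
  invFun u := u.1.head?
  left_inv o := by cases o <;> rfl
  right_inv u := by
    obtain ⟨w, hw⟩ := u
    rcases mem_quadBasis.mp hw with rfl | ⟨i, rfl⟩ <;> rfl

@[simp] lemma qbE_none : ((qbE n none : ↥(quadBasis n)) : Word n) = [] := rfl
@[simp] lemma qbE_some (i : Fin n) :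
    ((qbE n (some i) : ↥(quadBasis n)) : Word n) = [i] := rfl

lemma sumB {M : Type*} [AddCommMonoid M] (F : ↥(quadBasis n) → M) :
    ∑ u : ↥(quadBasis n), F u = F (qbE n none) + ∑ i, F (qbE n (some i)) := by
  rw [← Equiv.sum_comp (qbE n) F, Fintype.sum_option]

lemma pairingD_one (Q : Matrix ↥(quadBasis n) ↥(quadBasis n) ℝ) (w : Word n) :
    pairingD (quadBasis n) ncOne Q w
      = ∑ u : ↥(quadBasis n), ∑ v : ↥(quadBasis n),
          (if wstar u.1 ++ v.1 = w then Q u v else 0) := by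
  unfold pairingD ncOne
  refine Finset.sum_congr rfl fun u _ => Finset.sum_congr rfl fun v _ => ?_
  rw [Finsupp.sum_single_index (by simp)]
  simp only [List.append_nil]
  split <;> simp

open Matrix
variable {n : ℕ}
lemma pairingD_single (Q : Matrix ↥(quadBasis n) ↥(quadBasis n) ℝ) (j : Fin n) :
    pairingD (quadBasis n) ncOne Q [j]
      = Q (qbE n none) (qbE n (some j)) + Q (qbE n (some j)) (qbE n none) := by
  rw [pairingD_one]
  simp only [sumB]
  simp [wstar, Finset.sum_add_distrib, Finset.sum_ite_eq', List.cons_eq_cons, eq_comm]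

lemma pairingD_pair (Q : Matrix ↥(quadBasis n) ↥(quadBasis n) ℝ) (i j : Fin n) :
    pairingD (quadBasis n) ncOne Q [i, j]
      = Q (qbE n (some i)) (qbE n (some j)) := by
  rw [pairingD_one]
  simp only [sumB]
  simp only [qbE_none, qbE_some, wstar, List.reverse_nil, List.reverse_singleton,
    List.nil_append, List.singleton_append, List.cons_append, List.nil_append]
  simp [List.cons.injEq, ite_and, Finset.sum_ite_eq']

lemma supp_len {f : NCPoly n} (hdeg : ncDeg f = 2) {w : Word n} (hw : w ∈ f.support) :
    w.length ≤ 2 := hdeg ▸ Finset.le_sup hw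

lemma part2 {f : NCPoly n}
    (Q : Matrix ↥(quadBasis n) ↥(quadBasis n) ℝ) (hQ : Q.PosSemidef)
    (hGram : ∀ w, f w = pairingD (quadBasis n) ncOne Q w) :
    SparsityPattern (quadBasis n) (tspU (quadBasis n) f) Q := by
  intro u v h
  push_neg at h
  obtain ⟨hne, hadj⟩ := h
  have hne' : (u : Word n) ≠ (v : Word n) := fun h => hne (Subtype.ext h)
  have hsupp : ∀ s : Word n, wstar u.1 ++ v.1 = s → f s = 0 := by
    intro s hs
    by_contra hmem
    exact hadj ((SimpleGraph.fromRel_adj _ u.1 v.1).mpr ⟨hne', Or.inl ⟨u.2, v.2,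
      hs ▸ Or.inl (Finset.mem_coe.mpr (Finsupp.mem_support_iff.mpr hmem))⟩⟩)
  have hQs : ∀ a b, Q a b = Q b a := fun a b => by simpa using (hQ.1.apply a b).symm
  rcases mem_quadBasis.mp u.2 with hu | ⟨i, hu⟩ <;>
    rcases mem_quadBasis.mp v.2 with hv | ⟨j, hv⟩
  · exact absurd (hu.trans hv.symm) hne'
  · have h0 : f [j] = 0 := hsupp [j] (by simp [wstar, hu, hv])
    have := (hGram [j]).symm.trans h0
    rw [pairingD_single, hQs (qbE n (some j)) (qbE n none)] at this
    have hu2 : u = qbE n none := Subtype.ext hu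
    have hv2 : v = qbE n (some j) := Subtype.ext hv
    rw [hu2, hv2]; linarith
  · have h0 : f [i] = 0 := hsupp [i] (by simp [wstar, hu, hv])
    have := (hGram [i]).symm.trans h0
    rw [pairingD_single, hQs (qbE n (some i)) (qbE n none)] at this
    have hu2 : u = qbE n (some i) := Subtype.ext hu
    have hv2 : v = qbE n none := Subtype.ext hv
    rw [hu2, hv2, hQs]; linarith
  · have h0 : f [i, j] = 0 := hsupp [i, j] (by simp [wstar, hu, hv])
    have := (hGram [i, j]).symm.trans h0
    rw [pairingD_pair] at this
    have hu2 : u = qbE n (some i) := Subtype.ext hu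
    have hv2 : v = qbE n (some j) := Subtype.ext hv
    rw [hu2, hv2, this]

lemma dot_eval {r : ℕ} (f : NCPoly n) (A : Fin n → Matrix (Fin (r+1)) (Fin (r+1)) ℝ)
    (v : Fin (r+1) → ℝ) :
    v ⬝ᵥ (evalNC f A).mulVec v
      = ∑ w ∈ f.support, f w * (v ⬝ᵥ ((w.map A).prod).mulVec v) := by
  unfold evalNC
  rw [Finsupp.sum]
  rw [show (∑ a ∈ f.support, f a • ((a.map A).prod)) *ᵥ v
      = ∑ a ∈ f.support, (f a • ((a.map A).prod)) *ᵥ v from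
    map_sum (Matrix.mulVec.addMonoidHomLeft v) _ f.support]
  simp only [dotProduct, Finset.sum_apply, Finset.mul_sum]
  rw [Finset.sum_comm]
  refine Finset.sum_congr rfl fun w _ => ?_
  simp [Matrix.smul_mulVec, Finset.mul_sum, mul_left_comm]


lemma prod_rev_transpose {r : ℕ} {A : Fin n → Matrix (Fin (r+1)) (Fin (r+1)) ℝ}
    (hA : ∀ i, (A i).IsSymm) (w : Word n) :
    ((w.reverse.map A).prod) = ((w.map A).prod)ᵀ := by
  induction w with
  | nil => simp
  | cons i t ih =>
      simp only [List.map_reverse] at ih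
      simp [List.reverse_cons, List.map_append, List.prod_append, Matrix.transpose_mul,
        List.map_reverse, ih, (hA i).eq]

lemma G0_le_G1 {f : NCPoly n} (E : ChordalExt n) :
    tspU (quadBasis n) f ≤ GseqU E (quadBasis n) f 1 := by
  have h1 : tspU (quadBasis n) f ≤ SE (quadBasis n) (tspU (quadBasis n) f) := by
    intro u v huv
    have huv' := huv
    simp only [tspU, SimpleGraph.fromRel_adj] at huv'
    obtain ⟨hne, h⟩ := huv'
    have hmem : u ∈ quadBasis n ∧ v ∈ quadBasis n := by
      rcases h with ⟨h1, h2, _⟩ | ⟨h1, h2, _⟩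
      exacts [⟨h1, h2⟩, ⟨h2, h1⟩]
    simp only [SE, SimpleGraph.fromRel_adj]
    exact ⟨hne, Or.inl ⟨hmem.1, hmem.2, Or.inl ⟨u, v, huv, rfl⟩⟩⟩
  exact h1.trans (E.le_ce _ _)

lemma adj_nil_single {f : NCPoly n} {i : Fin n} (h : [i] ∈ f.support) :
    (tspU (quadBasis n) f).Adj [] [i] := by
  simp only [tspU, SimpleGraph.fromRel_adj]
  exact ⟨by simp, Or.inl ⟨mem_quadBasis.mpr (Or.inl rfl),
    mem_quadBasis.mpr (Or.inr ⟨i, rfl⟩),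
    Or.inl (by simpa [wstar] using Finset.mem_coe.mpr h)⟩⟩

lemma adj_single_single {f : NCPoly n} {i j : Fin n} (hij : i ≠ j)
    (h : [i, j] ∈ f.support) : (tspU (quadBasis n) f).Adj [i] [j] := by
  simp only [tspU, SimpleGraph.fromRel_adj]
  exact ⟨by simpa using hij, Or.inl ⟨mem_quadBasis.mpr (Or.inr ⟨i, rfl⟩),
    mem_quadBasis.mpr (Or.inr ⟨j, rfl⟩),
    Or.inl (by simpa [wstar] using Finset.mem_coe.mpr h)⟩⟩


lemma key_dot {r : ℕ} (M N : Matrix (Fin (r+1)) (Fin (r+1)) ℝ) (v : Fin (r+1) → ℝ) :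
    v ⬝ᵥ (Mᵀ * N) *ᵥ v = (M *ᵥ v) ⬝ᵥ (N *ᵥ v) := by
  rw [← Matrix.mulVec_mulVec, dotProduct_mulVec, Matrix.vecMul_transpose]

lemma mem_ep_of_mat {f : NCPoly n}
    {r : ℕ} (A : Fin n → Matrix (Fin (r+1)) (Fin (r+1)) ℝ) (v : Fin (r+1) → ℝ)
    (hA : ∀ i, (A i).IsSymm) (hv : (∑ i, v i ^ 2) = 1) (G : SimpleGraph (Word n)) :
    ∃ y : Word n → ℝ,
      v ⬝ᵥ (evalNC f A).mulVec v = Ly y f ∧ y [] = 1 ∧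
      Completable (quadBasis n) G (momMat (quadBasis n) y) := by
  have hvv : v ⬝ᵥ v = 1 := by simpa [dotProduct, sq] using hv
  refine ⟨fun w => v ⬝ᵥ ((w.map A).prod).mulVec v, ?_, ?_, ?_⟩
  · rw [dot_eval]; rfl
  · simpa [Matrix.one_mulVec] using hvv
  · refine ⟨momMat _ _, ?_, fun u v _ => rfl⟩
    set Z : Matrix (Fin (r+1)) ↥(quadBasis n) ℝ :=
      fun a u => (((u.1.map A).prod).mulVec v) a with hZ
    have hmm : momMat (quadBasis n) (fun w => v ⬝ᵥ ((w.map A).prod).mulVec v)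
        = Zᴴ * Z := by
      ext u u'
      show (v ⬝ᵥ (((wstar u.1 ++ u'.1).map A).prod).mulVec v) = _
      rw [show wstar u.1 ++ u'.1 = u.1.reverse ++ u'.1 from rfl, List.map_append,
        List.prod_append, prod_rev_transpose hA, key_dot]
      simp [Matrix.mul_apply, Matrix.conjTranspose_apply, dotProduct]
      rfl
    rw [hmm]
    exact Matrix.posSemidef_conjTranspose_mul_self _


lemma mem_lam_of_ep {f : NCPoly n} (hdeg : ncDeg f = 2) (E : ChordalExt n)
    {y : Word n → ℝ} (hy1 : y [] = 1)
    (hC : Completable (quadBasis n) (GseqU E (quadBasis n) f 1) (momMat (quadBasis n) y)) :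
    ∃ (r : ℕ) (A : Fin n → Matrix (Fin (r+1)) (Fin (r+1)) ℝ) (v : Fin (r+1) → ℝ),
      (∀ i, (A i).IsSymm) ∧ (∑ i, v i ^ 2) = 1 ∧
        Ly y f = v ⬝ᵥ (evalNC f A).mulVec v := by
  obtain ⟨P, hPpsd, hP⟩ := hC
  obtain ⟨C, hCeq⟩ : ∃ C : Matrix ↥(quadBasis n) ↥(quadBasis n) ℝ, P = Cᴴ * C := by
    open scoped MatrixOrder in
    obtain ⟨X, hX, -, hXe⟩ := CFC.exists_sqrt_of_isSelfAdjoint_of_quasispectrumRestricts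
      hPpsd.isHermitian
      (QuasispectrumRestricts.nnreal_of_nonneg (Matrix.nonneg_iff_posSemidef.mpr hPpsd))
    exact ⟨X, by rw [← hXe, ← Matrix.star_eq_conjTranspose, hX.star_eq]⟩
  have hNpos : 0 < Fintype.card ↥(quadBasis n) := Fintype.card_pos_iff.mpr ⟨qbE n none⟩
  refine ⟨Fintype.card ↥(quadBasis n) - 1, ?_⟩
  set r := Fintype.card ↥(quadBasis n) - 1 with hr
  have hcard : Fintype.card ↥(quadBasis n) = r + 1 := by omega
  set ψ : ↥(quadBasis n) ≃ Fin (r + 1) := (Fintype.equivFin _).trans (finCongr hcard) with hψ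
  set z : Option (Fin n) → Fin (r+1) → ℝ := fun o a => C (ψ.symm a) (qbE n o) with hz
  have hzz : ∀ o o', z o ⬝ᵥ z o' = P (qbE n o) (qbE n o') := by
    intro o o'
    rw [hCeq]
    simp only [Matrix.mul_apply, Matrix.conjTranspose_apply, star_trivial]
    rw [← Equiv.sum_comp ψ.symm (fun b => C b (qbE n o) * C b (qbE n o'))]
    rfl
  have hyP : ∀ o o', ((qbE n o : ↥(quadBasis n)) = qbE n o' ∨
      (GseqU E (quadBasis n) f 1).Adj (qbE n o).1 (qbE n o').1) →
      z o ⬝ᵥ z o' = y (wstar (qbE n o).1 ++ (qbE n o').1) :=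
    fun o o' h => (hzz o o').trans (hP _ _ h)
  set v : Fin (r+1) → ℝ := z none with hv
  have hvv : v ⬝ᵥ v = 1 := by
    have h := hyP none none (Or.inl rfl)
    simpa [wstar, hy1] using h
  set A : Fin n → Matrix (Fin (r+1)) (Fin (r+1)) ℝ := fun i => fun a b =>
    z (some i) a * v b + v a * z (some i) b - (z (some i) ⬝ᵥ v) * (v a * v b) with hA
  have hAsymm : ∀ i, (A i).IsSymm := by
    intro i
    show (A i)ᵀ = A i
    ext a b
    rw [Matrix.transpose_apply]
    simp only [Matrix.transpose_apply, hA]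
    ring
  have hAv : ∀ i, (A i) *ᵥ v = z (some i) := by
    intro i
    funext a
    have h1 : ((A i) *ᵥ v) a
        = z (some i) a * (v ⬝ᵥ v) + v a * (z (some i) ⬝ᵥ v)
          - (z (some i) ⬝ᵥ v) * (v a * (v ⬝ᵥ v)) := by
      simp only [Matrix.mulVec, dotProduct, hA, Finset.mul_sum]
      rw [← Finset.sum_add_distrib, ← Finset.sum_sub_distrib]
      exact Finset.sum_congr rfl fun b _ => by ring
    rw [h1, hvv]
    ring
  refine ⟨A, v, hAsymm, by simpa [dotProduct, sq] using hvv, ?_⟩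
  rw [dot_eval]
  show (Finsupp.sum f fun w a => a * y w) = _
  rw [Finsupp.sum]
  refine Finset.sum_congr rfl fun w hw => ?_
  congr 1
  have hlen : w.length ≤ 2 := supp_len hdeg hw
  match w, hlen with
  | [], _ =>
      simp [Matrix.one_mulVec, hvv, hy1]
  | [i], _ => 
      have hedge := G0_le_G1 E (adj_nil_single hw)
      have h := hyP none (some i) (Or.inr hedge)
      simp only [List.map_cons, List.map_nil, List.prod_cons, List.prod_nil, mul_one]
      rw [show v ⬝ᵥ (A i) *ᵥ v = z none ⬝ᵥ z (some i) by rw [hAv i], h]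
      simp [wstar]
  | [i, j], _ =>
      have hcond : (qbE n (some i) : ↥(quadBasis n)) = qbE n (some j) ∨
          (GseqU E (quadBasis n) f 1).Adj (qbE n (some i)).1 (qbE n (some j)).1 := by
        by_cases hij : i = j
        · exact Or.inl (by rw [hij])
        · exact Or.inr (G0_le_G1 E (adj_single_single hij hw))
      have h := hyP (some i) (some j) hcond
      simp only [List.map_cons, List.map_nil, List.prod_cons, List.prod_nil, mul_one]
      rw [show v ⬝ᵥ (A i * A j) *ᵥ v = z (some i) ⬝ᵥ z (some j) by
        rw [← (hAsymm i).eq, key_dot, hAv i, hAv j], h]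
      simp [wstar]
  | (i :: j :: k :: t), h => 
      simp at h

end Stmt3Aux

/-- for quadratic `f`, `λ_1(f) = λ_min(f)`; equivalently, if `f` admits a PSD
Gram matrix indexed by `B = {1, X_1, …, X_n}`, then it admits one in `𝕊₊^{n+1} ∩ 𝕊_{G_0}`. -/
theorem stmt3 {n : ℕ} (f : NCPoly n) (hsym : IsSymNC f) (hdeg : ncDeg f = 2)
    (E : ChordalExt n) :
    epVal (quadBasis n) (GseqU E (quadBasis n) f 1) f = lambdaMin f ∧
    (∀ Q : Matrix ↥(quadBasis n) ↥(quadBasis n) ℝ, Q.PosSemidef →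
      (∀ w, f w = pairingD (quadBasis n) ncOne Q w) →
      ∃ Q' : Matrix ↥(quadBasis n) ↥(quadBasis n) ℝ, Q'.PosSemidef ∧
        SparsityPattern (quadBasis n) (tspU (quadBasis n) f) Q' ∧
        ∀ w, f w = pairingD (quadBasis n) ncOne Q' w) := by
  constructor
  · unfold epVal lambdaMin
    congr 1
    ext c
    constructor
    · rintro ⟨y, rfl, hy1, hC⟩
      obtain ⟨r, A, v, hA, hv, heq⟩ := mem_lam_of_ep hdeg E hy1 hC
      exact ⟨r, A, v, hA, hv, heq⟩
    · rintro ⟨r, A, v, hA, hv, hc⟩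
      obtain ⟨y, heq, hy1, hCmp⟩ := mem_ep_of_mat A v hA hv (GseqU E (quadBasis n) f 1)
      exact ⟨y, hc.trans heq, hy1, hCmp⟩
  · intro Q hQ hGram
    exact ⟨Q, hQ, part2 Q hQ hGram, hGram⟩
end
end

section
/- Let f ∈ Sym ℝ⟨X⟩ and S = {g_1,…,g_m} ⊆ Sym ℝ⟨X⟩, fix d̂ ≥ d, and build the cyclic term-sparsity graph sequences (H_{d̂,j}^{(k)})_{k≥1} using the maximal chordal extension at each step. Then the sequence (μ_{d̂,k}^ts(f,S))_{k≥1} converges to the dense tracial optimum μ_{d̂}(f,S) in finitely many steps: if H_{d̂,j}^{(∘)} denote the stabilized graphs, the corresponding optimal value μ_{d̂,∘}(f,S) equals μ_{d̂}(f,S). -/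
open scoped Classical BigOperators RealInnerProductSpace

noncomputable section

/-! ### Auxiliary lemmas -/

section Aux

variable {n : ℕ}

@[simp] lemma wstar_append (a b : Word n) : wstar (a ++ b) = wstar b ++ wstar a :=
  List.reverse_append

lemma wstar_def (a : Word n) : wstar a = a.reverse := rfl

@[simp] lemma wstar_nil : wstar ([] : Word n) = [] := rfl

@[simp] lemma length_wstar (a : Word n) : (wstar a).length = a.length :=
  List.length_reverse

@[simp] lemma wstar_wstar (a : Word n) : wstar (wstar a) = a := List.reverse_reverse a

lemma cycEq_refl (u : Word n) : cycEq u u := ⟨0, (List.rotate_zero u).symm⟩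

lemma cycEq_iff_isRotated {u v : Word n} : cycEq u v ↔ v ~r u :=
  exists_congr fun _ => eq_comm

lemma cycEq_symm {u v : Word n} (h : cycEq u v) : cycEq v u :=
  cycEq_iff_isRotated.2 (cycEq_iff_isRotated.1 h).symm

lemma cycEq_trans {u v w : Word n} (h1 : cycEq u v) (h2 : cycEq v w) : cycEq u w :=
  cycEq_iff_isRotated.2 ((cycEq_iff_isRotated.1 h2).trans (cycEq_iff_isRotated.1 h1))

lemma cycEq_append_comm (a b : Word n) : cycEq (b ++ a) (a ++ b) :=
  ⟨a.length, (List.rotate_append_length_eq a b).symm⟩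

lemma mem_wordsLen {w : Word n} {k : ℕ} : w ∈ wordsLen n k ↔ w.length = k := by
  induction k generalizing w with
  | zero =>
    simp [wordsLen, List.length_eq_zero_iff]
  | succ k ih =>
    simp only [wordsLen, Finset.mem_image, Finset.mem_product, Finset.mem_univ, true_and]
    constructor
    · rintro ⟨⟨a, t⟩, ht, rfl⟩
      simp [ih.1 ht]
    · intro h
      match w, h with
      | a :: t, h =>
        exact ⟨(a, t), ih.2 (by simpa using h), rfl⟩

lemma mem_Wd {w : Word n} {d : ℕ} : w ∈ Wd n d ↔ w.length ≤ d := by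
  simp only [Wd, Finset.mem_biUnion, Finset.mem_range, mem_wordsLen]
  constructor
  · rintro ⟨k, hk, rfl⟩; omega
  · intro h; exact ⟨w.length, by omega, rfl⟩

lemma ncOne_support : (ncOne : NCPoly n).support = {([] : Word n)} :=
  Finsupp.support_single_ne_zero _ one_ne_zero

end Aux
section Psd

open Matrix

lemma masked_posSemidef' {N : Type*} [Fintype N] (P : Matrix N N ℝ) (hP : P.PosSemidef)
    (r : N → N → Prop) (hr : Equivalence r) :
    Matrix.PosSemidef (Matrix.of fun u v => if r u v then P u v else 0) := by
  classical
  letI s : Setoid N := ⟨r, hr⟩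
  have key : (Matrix.of fun u v => if r u v then P u v else 0)
      = ∑ q : Quotient s,
          (Matrix.diagonal fun u => if Quotient.mk s u = q then (1 : ℝ) else 0) * P *
          (Matrix.diagonal fun u => if Quotient.mk s u = q then (1 : ℝ) else 0) := by
    ext u v
    rw [Matrix.sum_apply]
    have h1 : ∀ q : Quotient s,
        ((Matrix.diagonal fun u => if Quotient.mk s u = q then (1 : ℝ) else 0) * P *
          (Matrix.diagonal fun u => if Quotient.mk s u = q then (1 : ℝ) else 0)) u v
        = (if Quotient.mk s u = q then (1 : ℝ) else 0) * P u v *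
            (if Quotient.mk s v = q then (1 : ℝ) else 0) := by
      intro q
      rw [Matrix.mul_diagonal, Matrix.diagonal_mul]
    simp only [h1]
    have h2 : ∀ q : Quotient s,
        (if Quotient.mk s u = q then (1 : ℝ) else 0) * P u v *
            (if Quotient.mk s v = q then (1 : ℝ) else 0)
        = if Quotient.mk s u = q then
            (if Quotient.mk s v = Quotient.mk s u then P u v else 0) else 0 := by
      intro q
      by_cases h : Quotient.mk s u = q
      · subst h
        by_cases h' : Quotient.mk s v = Quotient.mk s u <;> simp [h']
      · simp [h]
    simp only [h2]
    rw [Finset.sum_ite_eq (Finset.univ : Finset (Quotient s)) (Quotient.mk s u)]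
    simp only [Finset.mem_univ, if_true]
    have : (Quotient.mk s v = Quotient.mk s u) ↔ r u v := by
      rw [Quotient.eq]
      exact ⟨fun h => hr.symm h, fun h => hr.symm h⟩
    by_cases h : r u v
    · simp [Matrix.of_apply, this, h]
    · simp [Matrix.of_apply, this, h]
  rw [key]
  apply Finset.sum_induction _ Matrix.PosSemidef
    (fun a b ha hb => ha.add hb)
  · constructor
    · exact Matrix.isHermitian_zero
    · intro x; simp
  · intro q _
    have hD : (Matrix.diagonal fun u => if Quotient.mk s u = q then (1 : ℝ) else 0)ᴴ
        = Matrix.diagonal fun u => if Quotient.mk s u = q then (1 : ℝ) else 0 := by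
      rw [Matrix.diagonal_conjTranspose]
      congr 1
    have := hP.mul_mul_conjTranspose_same
      (Matrix.diagonal fun u => if Quotient.mk s u = q then (1 : ℝ) else 0)
    rwa [hD] at this

lemma masked_posSemidef {N : Type*} [Fintype N] (P : Matrix N N ℝ) (hP : P.PosSemidef)
    (r : N → N → Prop) (hr : Equivalence r) (M : Matrix N N ℝ)
    (h1 : ∀ u v, r u v → M u v = P u v) (h2 : ∀ u v, ¬ r u v → M u v = 0) :
    M.PosSemidef := by
  classical
  have : M = Matrix.of fun u v => if r u v then P u v else 0 := by
    ext u v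
    by_cases h : r u v
    · simp [Matrix.of_apply, h, h1 u v h]
    · simp [Matrix.of_apply, h, h2 u v h]
  rw [this]
  exact masked_posSemidef' P hP r hr

end Psd
section Graphs

variable {n m : ℕ} (f : NCPoly n) (g : Fin m → NCPoly n) (dh : ℕ)

/-- The relation generating the pre-graph at step `k+1`. -/
def preRel (k : ℕ) (j : Fin (m + 1)) : Word n → Word n → Prop := fun u v =>
  u ∈ Wd n (dh - dAug g j) ∧ v ∈ Wd n (dh - dAug g j) ∧
    ∃ w ∈ (gAug g j).support,
      ∃ s ∈ (⋃ j' : Fin (m + 1), gsuppP (gAug g j') (GseqTMax f g dh k j')) ∪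
          Bsq (Wd n dh),
        cycEq (wstar u ++ w ++ v) s

lemma GseqTMax_succ (k : ℕ) (j : Fin (m + 1)) :
    GseqTMax f g dh (k + 1) j = maxCE (SimpleGraph.fromRel (preRel f g dh k j)) := rfl

lemma GseqTMax_zero_zero : GseqTMax f g dh 0 0 = tspT f g dh := by
  simp [GseqTMax]

lemma GseqTMax_zero_succ (i : Fin m) : GseqTMax f g dh 0 i.succ = ⊥ := by
  simp [GseqTMax]

lemma maxCE_adj {G : SimpleGraph (Word n)} {u v : Word n} :
    (maxCE G).Adj u v ↔ u ≠ v ∧ G.Reachable u v := Iff.rfl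

lemma maxCE_mono {G G' : SimpleGraph (Word n)} (h : G ≤ G') : maxCE G ≤ maxCE G' :=
  fun _ _ hadj => ⟨hadj.1, hadj.2.mono h⟩

lemma le_maxCE (G : SimpleGraph (Word n)) : G ≤ maxCE G :=
  fun _ _ hadj => ⟨hadj.ne, hadj.reachable⟩

lemma gsuppP_mono (p : NCPoly n) {G G' : SimpleGraph (Word n)} (h : G ≤ G') :
    gsuppP p G ⊆ gsuppP p G' := by
  rintro s ⟨u, v, w, hadj, hw, rfl⟩
  exact ⟨u, v, w, h hadj, hw, rfl⟩

@[simp] lemma gAug_zero : gAug g 0 = ncOne := by simp [gAug]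

@[simp] lemma dAug_zero : dAug g 0 = 0 := by simp [dAug]

lemma nil_mem_gAug_zero_support : ([] : Word n) ∈ (gAug g 0).support := by
  rw [gAug_zero, ncOne_support]; exact Finset.mem_singleton_self _

/-- Monotonicity in `k`. -/
lemma GseqTMax_mono_succ : ∀ k, ∀ j, GseqTMax f g dh k j ≤ GseqTMax f g dh (k + 1) j := by
  intro k
  induction k with
  | zero =>
    intro j
    induction j using Fin.cases with
    | zero =>
      rw [GseqTMax_zero_zero, GseqTMax_succ]
      intro u v huv
      rw [tspT, SimpleGraph.fromRel_adj] at huv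
      obtain ⟨hne, hrel⟩ := huv
      have hWd : u ∈ Wd n dh ∧ v ∈ Wd n dh := by
        rcases hrel with ⟨h1, h2, _⟩ | ⟨h1, h2, _⟩
        · exact ⟨h1, h2⟩
        · exact ⟨h2, h1⟩
      have hAdj : (tspT f g dh).Adj u v := by
        rw [tspT, SimpleGraph.fromRel_adj]
        exact ⟨hne, hrel⟩
      refine (le_maxCE _) (SimpleGraph.fromRel_adj _ u v |>.2 ⟨hne, Or.inl ?_⟩)
      refine ⟨by simpa using hWd.1, by simpa using hWd.2, [], nil_mem_gAug_zero_support g, ?_⟩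
      refine ⟨wstar u ++ [] ++ v, Or.inl ?_, cycEq_refl _⟩
      refine Set.mem_iUnion.2 ⟨0, ?_⟩
      rw [GseqTMax_zero_zero]
      exact ⟨u, v, [], hAdj, nil_mem_gAug_zero_support g, rfl⟩
    | succ i =>
      rw [GseqTMax_zero_succ]
      exact bot_le
  | succ k ih =>
    intro j
    rw [GseqTMax_succ, GseqTMax_succ]
    apply maxCE_mono
    intro u v huv
    rw [SimpleGraph.fromRel_adj] at huv ⊢
    refine ⟨huv.1, ?_⟩
    have step : ∀ a b, preRel f g dh k j a b → preRel f g dh (k + 1) j a b := by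
      rintro a b ⟨h1, h2, w, hw, s, hs, hc⟩
      refine ⟨h1, h2, w, hw, s, ?_, hc⟩
      rcases hs with hs | hs
      · left
        obtain ⟨S, ⟨j', rfl⟩, hmem⟩ := hs
        exact Set.mem_iUnion.2 ⟨j', gsuppP_mono _ (ih j') hmem⟩
      · exact Or.inr hs
    rcases huv.2 with h | h
    · exact Or.inl (step _ _ h)
    · exact Or.inr (step _ _ h)

lemma GseqTMax_mono {k k' : ℕ} (h : k ≤ k') (j : Fin (m + 1)) :
    GseqTMax f g dh k j ≤ GseqTMax f g dh k' j := by
  induction k' with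
  | zero => cases Nat.le_zero.1 h; exact le_refl _
  | succ k' ih =>
    rcases Nat.lt_or_ge k (k' + 1) with h' | h'
    · exact le_trans (ih (by omega)) (GseqTMax_mono_succ f g dh k' j)
    · have : k = k' + 1 := by omega
      subst this; exact le_refl _

/-- Edges of the graphs lie inside the node sets. -/
lemma GseqTMax_adj_mem {k : ℕ} {j : Fin (m + 1)} {u v : Word n}
    (h : (GseqTMax f g dh k j).Adj u v) :
    u ∈ Wd n (dh - dAug g j) ∧ v ∈ Wd n (dh - dAug g j) := by
  cases k with
  | zero =>
    induction j using Fin.cases with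
    | zero =>
      rw [GseqTMax_zero_zero f g dh, tspT, SimpleGraph.fromRel_adj] at h
      rcases h.2 with ⟨h1, h2, _⟩ | ⟨h1, h2, _⟩ <;>
        simp only [dAug_zero, Nat.sub_zero] <;> exact ⟨by assumption, by assumption⟩
    | succ i => rw [GseqTMax_zero_succ] at h; exact absurd h (by simp)
  | succ k =>
    rw [GseqTMax_succ, maxCE_adj] at h
    obtain ⟨hne, ⟨w⟩⟩ := h
    have first : ∀ (a b : Word n), a ≠ b → (SimpleGraph.fromRel (preRel f g dh k j)).Walk a b →
        a ∈ Wd n (dh - dAug g j) := by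
      intro a b hab p
      cases p with
      | nil => exact absurd rfl hab
      | cons h' _ =>
        rw [SimpleGraph.fromRel_adj] at h'
        rcases h'.2 with ⟨h1, _, _⟩ | ⟨_, h2, _⟩
        · exact h1
        · exact h2
    exact ⟨first u v hne w, first v u (Ne.symm hne) w.reverse⟩

end Graphs
section Stab

variable {n m : ℕ} (f : NCPoly n) (g : Fin m → NCPoly n) (dh : ℕ)

lemma GseqTMax_stab :
    ∃ k0 : ℕ, 1 ≤ k0 ∧
      ∀ k, k0 ≤ k → ∀ j : Fin (m + 1), GseqTMax f g dh k j = GseqTMax f g dh k0 j := by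
  classical
  set V : Fin (m + 1) → Finset (Word n) := fun j => Wd n (dh - dAug g j) with hV
  set E : ℕ → Fin (m + 1) → Finset (Word n × Word n) := fun k j =>
    ((V j) ×ˢ (V j)).filter fun p => (GseqTMax f g dh k j).Adj p.1 p.2 with hE
  have hadj_iff : ∀ k j (u v : Word n),
      (GseqTMax f g dh k j).Adj u v ↔ (u, v) ∈ E k j := by
    intro k j u v
    simp only [hE, Finset.mem_filter, Finset.mem_product]
    constructor
    · intro h
      exact ⟨⟨(GseqTMax_adj_mem f g dh h).1, (GseqTMax_adj_mem f g dh h).2⟩, h⟩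
    · exact fun h => h.2
  have hE_mono : ∀ k k', k ≤ k' → ∀ j, E k j ⊆ E k' j := by
    intro k k' hk j p hp
    simp only [hE, Finset.mem_filter] at hp ⊢
    exact ⟨hp.1, GseqTMax_mono f g dh hk j hp.2⟩
  set c : ℕ → ℕ := fun k => ∑ j : Fin (m + 1), (E k j).card with hc
  have hc_mono : ∀ k k', k ≤ k' → c k ≤ c k' := by
    intro k k' hk
    exact Finset.sum_le_sum fun j _ => Finset.card_le_card (hE_mono k k' hk j)
  have hbdd : BddAbove (Set.range c) := by
    refine ⟨∑ j : Fin (m + 1), ((V j) ×ˢ (V j)).card, ?_⟩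
    rintro x ⟨k, rfl⟩
    exact Finset.sum_le_sum fun j _ => Finset.card_le_card (Finset.filter_subset _ _)
  obtain ⟨k1, hk1⟩ : ∃ k1, c k1 = sSup (Set.range c) := by
    have := Nat.sSup_mem (s := Set.range c) ⟨c 0, ⟨0, rfl⟩⟩ hbdd
    obtain ⟨k1, hk1⟩ := this
    exact ⟨k1, hk1⟩
  have hconst : ∀ k, k1 ≤ k → c k = c k1 := by
    intro k hk
    refine le_antisymm ?_ (hc_mono _ _ hk)
    rw [hk1]
    exact le_csSup hbdd ⟨k, rfl⟩
  have hEconst : ∀ k, k1 ≤ k → ∀ j, E k j = E k1 j := by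
    intro k hk j
    have hsub := hE_mono k1 k hk
    have hsum : ∑ j : Fin (m + 1), (E k1 j).card = ∑ j : Fin (m + 1), (E k j).card :=
      (hconst k hk).symm
    have := (Finset.sum_eq_sum_iff_of_le
      (fun j _ => Finset.card_le_card (hsub j))).1 hsum
    exact (Finset.eq_of_subset_of_card_le (hsub j)
      (le_of_eq (this j (Finset.mem_univ j)).symm)).symm
  have hGconst : ∀ k, k1 ≤ k → ∀ j, GseqTMax f g dh k j = GseqTMax f g dh k1 j := by
    intro k hk j
    ext u v
    rw [hadj_iff k j u v, hadj_iff k1 j u v, hEconst k hk j]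
  refine ⟨max k1 1, le_max_right _ _, ?_⟩
  intro k hk j
  rw [hGconst k (le_trans (le_max_left _ _) hk) j,
    hGconst (max k1 1) (le_max_left _ _) j]

end Stab
section Core

variable {n m : ℕ} (f : NCPoly n) (g : Fin m → NCPoly n) (dh k0 : ℕ)

/-- The set of "kept" words: those cyclically equivalent to an element of
`Union∘ ∪ Bsq`. -/
def KeepW : Word n → Prop := fun w =>
  ∃ s ∈ (⋃ j' : Fin (m + 1), gsuppP (gAug g j') (GseqTMax f g dh k0 j')) ∪
      Bsq (Wd n dh), cycEq w s

lemma keepW_cyc {w w' : Word n} (h : KeepW f g dh k0 w) (hc : cycEq w' w) :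
    KeepW f g dh k0 w' := by
  obtain ⟨s, hs, hcyc⟩ := h
  exact ⟨s, hs, cycEq_trans hc hcyc⟩

lemma keepW_of_bsq {q : Word n} (hq : q ∈ Wd n dh) : KeepW f g dh k0 (wstar q ++ q) :=
  ⟨wstar q ++ q, Or.inr ⟨q, hq, rfl⟩, cycEq_refl _⟩

lemma keepW_open {p q : Word n} (hp : p ∈ Wd n dh) (hq : q ∈ Wd n dh)
    (h : p = q ∨ (GseqTMax f g dh k0 0).Adj p q) : KeepW f g dh k0 (wstar p ++ q) := by
  rcases h with rfl | hAdj
  · exact keepW_of_bsq f g dh k0 hq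
  · refine ⟨wstar p ++ [] ++ q, Or.inl ?_, by simpa using cycEq_refl (wstar p ++ q)⟩
    exact Set.mem_iUnion.2 ⟨0, ⟨p, q, [], hAdj, nil_mem_gAug_zero_support g, rfl⟩⟩

lemma adj_of_keepW
    (hst : ∀ j : Fin (m + 1), GseqTMax f g dh (k0 + 1) j = GseqTMax f g dh k0 j) {j : Fin (m + 1)} {p q : Word n}
    (hp : p ∈ Wd n (dh - dAug g j)) (hq : q ∈ Wd n (dh - dAug g j)) (hne : p ≠ q)
    (h : ∃ s ∈ (gAug g j).support, KeepW f g dh k0 (wstar p ++ s ++ q)) :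
    (GseqTMax f g dh k0 j).Adj p q := by
  rw [← hst j, GseqTMax_succ]
  obtain ⟨s, hs, w', hw', hcyc⟩ := h
  refine le_maxCE _ ?_
  rw [SimpleGraph.fromRel_adj]
  exact ⟨hne, Or.inl ⟨hp, hq, s, hs, w', hw', hcyc⟩⟩

lemma supp_gAug_len {j : Fin (m + 1)} {s : Word n} (hs : s ∈ (gAug g j).support) :
    s.length ≤ 2 * dAug g j := by
  induction j using Fin.cases with
  | zero =>
    rw [gAug_zero, ncOne_support, Finset.mem_singleton] at hs
    subst hs; simp
  | succ i =>
    have h1 : s.length ≤ ncDeg (g i) := Finset.le_sup (f := List.length) (by simpa [gAug] using hs)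
    have h2 : gAug g i.succ = g i := by simp [gAug]
    have h3 : dAug g i.succ = ceilHalf (ncDeg (g i)) := by simp [dAug]
    rw [h3]
    unfold ceilHalf
    omega

lemma dAug_le_dh (hdh : minOrderT f g ≤ dh) (j : Fin (m + 1)) : dAug g j ≤ dh := by
  induction j using Fin.cases with
  | zero => simp
  | succ i =>
    have h3 : dAug g i.succ = ceilHalf (ncDeg (g i)) := by simp [dAug]
    rw [h3]
    calc ceilHalf (ncDeg (g i))
        ≤ Finset.univ.sup fun j : Fin m => ceilHalf (ncDeg (g j)) :=
          Finset.le_sup (f := fun j : Fin m => ceilHalf (ncDeg (g j))) (Finset.mem_univ i)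
      _ ≤ minOrderT f g := le_max_right _ _
      _ ≤ dh := hdh

lemma keepW_of_A {w : Word n} (hw : w ∈ Asupp f g) (hlen : w.length ≤ 2 * dh) :
    KeepW f g dh k0 w := by
  set k := (w.length + 1) / 2 with hk
  set c1 := w.take k with hc1
  set c2 := w.drop k with hc2
  have hsplit : c1 ++ c2 = w := List.take_append_drop k w
  have hlen1 : c1.length = k := by
    rw [hc1, List.length_take]; omega
  have hlen2 : c2.length = w.length - k := by rw [hc2, List.length_drop]
  set p := c1.reverse with hp
  have hpWd : p ∈ Wd n dh := by rw [mem_Wd, hp, List.length_reverse]; omega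
  have hqWd : c2 ∈ Wd n dh := by rw [mem_Wd]; omega
  have hwp : wstar p ++ c2 = w := by
    rw [hp]; show (c1.reverse).reverse ++ c2 = w
    rw [List.reverse_reverse]; exact hsplit
  by_cases hpq : p = c2
  · have : w = wstar c2 ++ c2 := by rw [← hwp, hpq]
    rw [this]
    exact keepW_of_bsq f g dh k0 hqWd
  · have hAdj0 : (tspT f g dh).Adj p c2 := by
      rw [tspT, SimpleGraph.fromRel_adj]
      exact ⟨hpq, Or.inl ⟨hpWd, hqWd, w, Or.inl hw, by rw [hwp]; exact cycEq_refl w⟩⟩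
    have hAdj : (GseqTMax f g dh k0 0).Adj p c2 := by
      have := GseqTMax_mono f g dh (Nat.zero_le k0) 0
      rw [GseqTMax_zero_zero] at this
      exact this hAdj0
    have := keepW_open f g dh k0 hpWd hqWd (Or.inr hAdj)
    rwa [hwp] at this

/-- The key closure property (ATOM): appending a squared letter to any representative
of a kept class yields a kept class. -/
lemma keepW_append_sq
    (hst : ∀ j : Fin (m + 1), GseqTMax f g dh (k0 + 1) j = GseqTMax f g dh k0 j) (hdh2 : 2 ≤ dh) {c : Word n} (hc : KeepW f g dh k0 c)
    (hlen : c.length + 2 ≤ 2 * dh) (e : Fin n) : KeepW f g dh k0 (c ++ [e, e]) := by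
  set k := c.length - dh with hk
  set c1 := c.take k with hc1
  set c2 := c.drop k with hc2
  have hsplit : c1 ++ c2 = c := List.take_append_drop k c
  have hlen1 : c1.length = k := by rw [hc1, List.length_take]; omega
  have hlen2 : c2.length = c.length - k := by rw [hc2, List.length_drop]
  have hk2 : k + 2 ≤ dh := by omega
  set p := c2.reverse with hp
  set q := e :: e :: c1 with hq
  have hplen : p.length ≤ dh := by rw [hp, List.length_reverse]; omega
  have hpWd : p ∈ Wd n dh := mem_Wd.2 hplen
  have hqWd : q ∈ Wd n dh := by rw [mem_Wd, hq]; simp; omega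
  have hc1Wd : c1 ∈ Wd n (dh - dAug g 0) := by
    rw [mem_Wd]; simp; omega
  have hpWd' : p ∈ Wd n (dh - dAug g 0) := by rw [mem_Wd]; simpa using hplen
  have hqWd' : q ∈ Wd n (dh - dAug g 0) := by
    rw [mem_Wd, hq]; simp; omega
  have hwp : wstar p ++ q = c2 ++ [e, e] ++ c1 := by
    rw [hp, hq]; show (c2.reverse).reverse ++ (e :: e :: c1) = c2 ++ [e, e] ++ c1
    rw [List.reverse_reverse]; simp
  have hkeep_pq : KeepW f g dh k0 (wstar p ++ q) := by
    by_cases hpq : p = q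
    · rw [hpq]; exact keepW_of_bsq f g dh k0 hqWd
    · -- build the path p — c1 — q in the pre-graph
      set pre := SimpleGraph.fromRel (preRel f g dh k0 0) with hpre
      have edge2 : pre.Adj c1 q := by
        rw [hpre, SimpleGraph.fromRel_adj]
        refine ⟨?_, Or.inl ⟨hc1Wd, hqWd', [], nil_mem_gAug_zero_support g, ?_⟩⟩
        · intro hcq
          have := congrArg List.length hcq
          rw [hq] at this; simp at this; omega
        · refine ⟨wstar (e :: c1) ++ (e :: c1), Or.inr ⟨e :: c1, ?_, rfl⟩, ?_⟩
          · rw [mem_Wd]; simp; omega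
          · have : wstar c1 ++ [] ++ q = wstar (e :: c1) ++ (e :: c1) := by
              rw [hq]; show wstar c1 ++ [] ++ (e :: e :: c1) = (e :: c1).reverse ++ (e :: c1)
              simp [wstar_def]
            rw [this]; exact cycEq_refl _
      have hreach : pre.Reachable p q := by
        by_cases hpc : p = c1
        · rw [hpc]; exact edge2.reachable
        · have edge1 : pre.Adj p c1 := by
            rw [hpre, SimpleGraph.fromRel_adj]
            refine ⟨hpc, Or.inl ⟨hpWd', hc1Wd, [], nil_mem_gAug_zero_support g, ?_⟩⟩
            obtain ⟨s0, hs0, hcyc0⟩ := hc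
            refine ⟨s0, hs0, ?_⟩
            have heq : wstar p ++ [] ++ c1 = c2 ++ c1 := by
              rw [hp]; show (c2.reverse).reverse ++ [] ++ c1 = c2 ++ c1
              simp
            rw [heq]
            exact cycEq_trans (cycEq_trans (cycEq_append_comm c1 c2) (hsplit ▸ cycEq_refl c)) hcyc0
          exact edge1.reachable.trans edge2.reachable
      have hAdj : (GseqTMax f g dh k0 0).Adj p q := by
        rw [← hst 0, GseqTMax_succ]
        exact ⟨hpq, hreach⟩
      exact keepW_open f g dh k0 hpWd hqWd (Or.inr hAdj)
  refine keepW_cyc f g dh k0 hkeep_pq ?_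
  rw [hwp]
  have h1 : c ++ [e, e] = c1 ++ (c2 ++ [e, e]) := by rw [← hsplit]; simp
  have h2 : c2 ++ [e, e] ++ c1 = (c2 ++ [e, e]) ++ c1 := by simp
  rw [h1, h2]
  exact cycEq_append_comm (c2 ++ [e, e]) c1

/-- Conjecture D: every "diagonal word" `u⋆ s u` is kept at stabilization. -/
lemma keepW_diag
    (hst : ∀ j : Fin (m + 1), GseqTMax f g dh (k0 + 1) j = GseqTMax f g dh k0 j) (hdh : minOrderT f g ≤ dh) (j : Fin (m + 1)) {s : Word n}
    (hs : s ∈ (gAug g j).support) :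
    ∀ u : Word n, u ∈ Wd n (dh - dAug g j) → KeepW f g dh k0 (wstar u ++ s ++ u) := by
  intro u
  induction u using List.reverseRecOn with
  | nil =>
    intro _
    simp only [wstar_nil, List.nil_append, List.append_nil]
    by_cases hsnil : s = []
    · subst hsnil
      have := keepW_of_bsq f g dh k0 (q := []) (by rw [mem_Wd]; simp)
      simpa using this
    · refine keepW_of_A f g dh k0 ?_ ?_
      · induction j using Fin.cases with
        | zero =>
          rw [gAug_zero, ncOne_support, Finset.mem_singleton] at hs
          exact absurd hs hsnil
        | succ i =>
          right
          refine Set.mem_iUnion.2 ⟨i, ?_⟩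
          simpa [gAug] using hs
      · have h1 := supp_gAug_len g hs
        have h2 := dAug_le_dh f g (dh := dh) hdh j
        omega
  | append_singleton z e ih =>
    intro hu
    have hzlen : z.length + 1 ≤ dh - dAug g j := by
      rw [mem_Wd] at hu; simpa using hu
    have hz : z ∈ Wd n (dh - dAug g j) := by rw [mem_Wd]; omega
    by_cases hsnil : s = []
    · subst hsnil
      have huWd : z ++ [e] ∈ Wd n dh := by
        rw [mem_Wd]; simp
        have := dAug_le_dh f g (dh := dh) hdh j
        omega
      have := keepW_of_bsq f g dh k0 huWd
      simpa using this
    · have hd1 : 1 ≤ dAug g j := by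
        induction j using Fin.cases with
        | zero =>
          rw [gAug_zero, ncOne_support, Finset.mem_singleton] at hs
          exact absurd hs hsnil
        | succ i =>
          have h3 : dAug g i.succ = ceilHalf (ncDeg (g i)) := by simp [dAug]
          have h1 : s.length ≤ ncDeg (g i) :=
            Finset.le_sup (f := List.length) (by simpa [gAug] using hs)
          have : 1 ≤ s.length := by
            cases s with
            | nil => exact absurd rfl hsnil
            | cons a t => simp
          rw [h3]; unfold ceilHalf; omega
      have hdh2 : 2 ≤ dh := by omega
      have hkc := ih hz
      have hslen := supp_gAug_len g hs
      have hclen : (wstar z ++ s ++ z).length + 2 ≤ 2 * dh := by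
        simp only [List.length_append, length_wstar]
        have := dAug_le_dh f g (dh := dh) hdh j
        omega
      have hkey := keepW_append_sq f g dh k0 hst hdh2 hkc hclen e
      refine keepW_cyc f g dh k0 hkey ?_
      refine cycEq_symm ?_
      refine ⟨1, ?_⟩
      have hW : wstar (z ++ [e]) ++ s ++ (z ++ [e])
          = e :: ((wstar z ++ s ++ z) ++ [e]) := by
        simp [wstar]
      rw [hW, List.rotate_cons_succ, List.rotate_zero]
      simp
  
end Core
section Final

variable {n m : ℕ}

lemma Ly_congr (f : NCPoly n) {y y' : Word n → ℝ} (h : ∀ w ∈ f.support, y' w = y w) :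
    Ly y' f = Ly y f :=
  Finsupp.sum_congr fun w hw => by rw [h w hw]

lemma edge_or_diag_of_keepW (f : NCPoly n) (g : Fin m → NCPoly n) (dh k0 : ℕ)
    (hst : ∀ j : Fin (m + 1), GseqTMax f g dh (k0 + 1) j = GseqTMax f g dh k0 j)
    {u v : Word n} (hu : u ∈ Wd n dh) (hv : v ∈ Wd n dh)
    (h : KeepW f g dh k0 (wstar u ++ v)) :
    u = v ∨ (GseqTMax f g dh k0 0).Adj u v := by
  by_cases huv : u = v
  · exact Or.inl huv
  · refine Or.inr (adj_of_keepW f g dh k0 hst (j := 0) ?_ ?_ huv ?_)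
    · simpa using hu
    · simpa using hv
    · exact ⟨[], nil_mem_gAug_zero_support g, by simpa using h⟩

theorem stmt14_aux (f : NCPoly n) (g : Fin m → NCPoly n)
    (dh : ℕ) (hdh : minOrderT f g ≤ dh) (k0 : ℕ)
    (hst : ∀ j : Fin (m + 1), GseqTMax f g dh (k0 + 1) j = GseqTMax f g dh k0 j) :
    tqTsValG f g dh (GseqTMax f g dh k0) = tqDenseVal f g dh := by
  classical
  rw [tqTsValG, tqDenseVal]
  congr 1
  ext r
  constructor
  · -- sparse value is dense-achievable
    rintro ⟨y, rfl, hy1, hcomp, hcyc⟩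
    set Y : Word n → ℝ := fun w =>
      if KeepW f g dh k0 w ∨ 2 * dh < w.length then y w else 0 with hY
    have hYeq : ∀ w : Word n, KeepW f g dh k0 w → Y w = y w := by
      intro w hw; rw [hY]; simp only [hw, true_or, if_true]
    have hYzero : ∀ w : Word n, ¬ KeepW f g dh k0 w → w.length ≤ 2 * dh → Y w = 0 := by
      intro w hw hlen; rw [hY]
      simp only [ite_eq_right_iff]
      rintro (h | h)
      · exact absurd h hw
      · omega
    refine ⟨Y, ?_, ?_, ?_, ?_⟩
    · -- value
      refine (Ly_congr f ?_).symm
      intro w hw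
      by_cases hl : 2 * dh < w.length
      · rw [hY]; simp only [hl, or_true, if_true]
      · exact hYeq w (keepW_of_A f g dh k0 (Or.inl hw) (by omega))
    · -- normalization
      have : KeepW f g dh k0 ([] : Word n) := by
        simpa using keepW_of_bsq f g dh k0 (q := ([] : Word n)) (by rw [mem_Wd]; simp)
      rw [hYeq _ this]; exact hy1
    · -- PSD of all localizing matrices
      intro j
      obtain ⟨P, hP, hPM⟩ := hcomp j
      set R : ↥(Wd n (dh - dAug g j)) → ↥(Wd n (dh - dAug g j)) → Prop :=
        fun u v => u = v ∨ (GseqTMax f g dh k0 j).Adj u.1 v.1 with hR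
      have hequiv : Equivalence R := by
        constructor
        · intro u; exact Or.inl rfl
        · intro u v h
          rcases h with rfl | h
          · exact Or.inl rfl
          · exact Or.inr h.symm
        · intro u v w h1 h2
          rcases h1 with rfl | h1
          · exact h2
          · rcases h2 with rfl | h2
            · exact Or.inr h1
            · by_cases huw : u = w
              · exact Or.inl huw
              · refine Or.inr ?_
                rw [← hst j, GseqTMax_succ] at h1 h2 ⊢
                exact ⟨fun he => huw (Subtype.ext he), h1.2.trans h2.2⟩
      refine masked_posSemidef P hP R hequiv _ ?_ ?_
      · intro u v hr
        show (gAug g j).sum (fun w a => a * Y (wstar u.1 ++ w ++ v.1)) = P u v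
        have hkeep : ∀ w ∈ (gAug g j).support,
            KeepW f g dh k0 (wstar u.1 ++ w ++ v.1) := by
          intro w hw
          rcases hr with rfl | hadj
          · exact keepW_diag f g dh k0 hst hdh j hw u.1 u.2
          · refine ⟨wstar u.1 ++ w ++ v.1, Or.inl ?_, cycEq_refl _⟩
            exact Set.mem_iUnion.2 ⟨j, ⟨u.1, v.1, w, hadj, hw, rfl⟩⟩
        have heq : (gAug g j).sum (fun w a => a * Y (wstar u.1 ++ w ++ v.1))
            = (gAug g j).sum (fun w a => a * y (wstar u.1 ++ w ++ v.1)) :=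
          Finsupp.sum_congr fun w hw => by rw [hYeq _ (hkeep w hw)]
        rw [heq]
        exact (hPM u v hr).symm
      · intro u v hr
        show (gAug g j).sum (fun w a => a * Y (wstar u.1 ++ w ++ v.1)) = 0
        have hne : u.1 ≠ v.1 := fun he => hr (Or.inl (Subtype.ext he))
        have hnadj : ¬ (GseqTMax f g dh k0 j).Adj u.1 v.1 := fun h => hr (Or.inr h)
        rw [Finsupp.sum]
        refine Finset.sum_eq_zero fun w hw => ?_
        have hzero : Y (wstar u.1 ++ w ++ v.1) = 0 := by
          refine hYzero _ ?_ ?_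
          · intro hk
            exact hnadj (adj_of_keepW f g dh k0 hst u.2 v.2 hne ⟨w, hw, hk⟩)
          · have h1 : u.1.length ≤ dh - dAug g j := mem_Wd.1 u.2
            have h2 : v.1.length ≤ dh - dAug g j := mem_Wd.1 v.2
            have h3 : w.length ≤ 2 * dAug g j := supp_gAug_len g hw
            have h4 : dAug g j ≤ dh := dAug_le_dh f g (dh := dh) hdh j
            simp only [List.length_append, length_wstar]
            omega
        rw [hzero, mul_zero]
    · -- dense cyclic constraint
      intro u v w z hu hv hw hz hcycuv
      by_cases hk : KeepW f g dh k0 (wstar u ++ v)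
      · have hk' : KeepW f g dh k0 (wstar w ++ z) :=
          keepW_cyc f g dh k0 hk (cycEq_symm hcycuv)
        have h1 := edge_or_diag_of_keepW f g dh k0 hst hu hv hk
        have h2 := edge_or_diag_of_keepW f g dh k0 hst hw hz hk'
        have := hcyc u v w z hu hv hw hz hcycuv
        rw [hadEntry, hadEntry, if_pos h1, if_pos h2] at this
        rw [hYeq _ hk, hYeq _ hk', this]
      · have hk' : ¬ KeepW f g dh k0 (wstar w ++ z) := by
          intro hkk
          exact hk (keepW_cyc f g dh k0 hkk hcycuv)
        have hl1 : (wstar u ++ v).length ≤ 2 * dh := by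
          have := mem_Wd.1 hu; have := mem_Wd.1 hv
          simp only [List.length_append, length_wstar]; omega
        have hl2 : (wstar w ++ z).length ≤ 2 * dh := by
          have := mem_Wd.1 hw; have := mem_Wd.1 hz
          simp only [List.length_append, length_wstar]; omega
        rw [hYzero _ hk hl1, hYzero _ hk' hl2]
  · -- dense value is sparse-achievable (with the same y)
    rintro ⟨y, rfl, hy1, hpsd, hcyc⟩
    refine ⟨y, rfl, hy1, ?_, ?_⟩
    · intro j
      exact ⟨locMat (Wd n (dh - dAug g j)) (gAug g j) y, hpsd j, fun _ _ _ => rfl⟩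
    · intro u v w z hu hv hw hz hcycuv
      rw [hadEntry, hadEntry]
      by_cases h1 : u = v ∨ (GseqTMax f g dh k0 0).Adj u v
      · have hk : KeepW f g dh k0 (wstar u ++ v) := keepW_open f g dh k0 hu hv h1
        have hk' : KeepW f g dh k0 (wstar w ++ z) :=
          keepW_cyc f g dh k0 hk (cycEq_symm hcycuv)
        have h2 := edge_or_diag_of_keepW f g dh k0 hst hw hz hk'
        rw [if_pos h1, if_pos h2]
        exact hcyc u v w z hu hv hw hz hcycuv
      · by_cases h2 : w = z ∨ (GseqTMax f g dh k0 0).Adj w z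
        · exfalso
          have hk' : KeepW f g dh k0 (wstar w ++ z) := keepW_open f g dh k0 hw hz h2
          have hk : KeepW f g dh k0 (wstar u ++ v) :=
            keepW_cyc f g dh k0 hk' hcycuv
          exact h1 (edge_or_diag_of_keepW f g dh k0 hst hu hv hk)
        · rw [if_neg h1, if_neg h2]

end Final

/-- with the maximal chordal extension, `(μ_{d̂,k}^{ts}(f,S))_{k≥1}` converges
to `μ_{d̂}(f,S)` in finitely many steps. -/
theorem stmt14 {n m : ℕ} (f : NCPoly n) (g : Fin m → NCPoly n)
    (hsym : IsSymNC f) (hgsym : ∀ j, IsSymNC (g j))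
    (dh : ℕ) (hdh : minOrderT f g ≤ dh) :
    ∃ k0 : ℕ, 1 ≤ k0 ∧
      (∀ k, k0 ≤ k → ∀ j : Fin (m + 1), GseqTMax f g dh k j = GseqTMax f g dh k0 j) ∧
      tqTsValG f g dh (GseqTMax f g dh k0) = tqDenseVal f g dh := by
  obtain ⟨k0, hk01, hstab⟩ := GseqTMax_stab f g dh
  have hst : ∀ j : Fin (m + 1), GseqTMax f g dh (k0 + 1) j = GseqTMax f g dh k0 j :=
    fun j => hstab (k0 + 1) (by omega) j
  exact ⟨k0, hk01, hstab, stmt14_aux f g dh hdh k0 hst⟩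
end
end

section
/- Let f ∈ Sym ℝ⟨X⟩ and S = {g_1,…,g_m} ⊆ Sym ℝ⟨X⟩, and suppose all chordal extensions are chosen so that G ⊆ H implies Ḡ ⊆ H̄. Then for every sparse order k ≥ 1, every relaxation order d̂ ≥ d and every j ∈ {0}∪[m], the term-sparsity graph at order d̂ embeds into the one at order d̂+1: G_{d̂,j}^{(k)} ⊆ G_{d̂+1,j}^{(k)} (i.e., every edge of G_{d̂,j}^{(k)} on node set W_{d̂−d_j} is an edge of G_{d̂+1,j}^{(k)} on node set W_{d̂+1−d_j}). -/
open scoped Classical BigOperators RealInnerProductSpace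

noncomputable section

lemma Wd_mono_aux {n d d' : ℕ} (h : d ≤ d') : Wd n d ⊆ Wd n d' := by
  intro w hw
  simp only [Wd, Finset.mem_biUnion, Finset.mem_range] at *
  obtain ⟨i, hi, hwi⟩ := hw
  exact ⟨i, by omega, hwi⟩

lemma Bsq_mono_aux {n : ℕ} {B B' : Finset (Word n)} (h : B ⊆ B') : Bsq B ⊆ Bsq B' :=
  fun _ ⟨u, hu, hw⟩ => ⟨u, h hu, hw⟩

lemma gsuppP_mono_aux {n : ℕ} (g : NCPoly n) {G H : SimpleGraph (Word n)} (hGH : G ≤ H) :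
    gsuppP g G ⊆ gsuppP g H :=
  fun _ ⟨u, v, w, h1, h2, h3⟩ => ⟨u, v, w, hGH h1, h2, h3⟩

lemma fromRel_mono_aux {V : Type*} {r s : V → V → Prop} (h : ∀ u v, r u v → s u v) :
    SimpleGraph.fromRel r ≤ SimpleGraph.fromRel s := by
  intro u v hv
  exact ⟨hv.1, hv.2.imp (h u v) (h v u)⟩

lemma GseqC_mono_dh {n m : ℕ} (E : ChordalExt n) (f : NCPoly n) (g : Fin m → NCPoly n)
    (dh : ℕ) : ∀ k, ∀ j : Fin (m + 1), GseqC E f g dh k j ≤ GseqC E f g (dh + 1) k j := by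
  intro k
  induction k with
  | zero =>
    intro j
    refine Fin.cases ?_ (fun j' => ?_) j
    · show tspC f g dh ≤ tspC f g (dh + 1)
      apply fromRel_mono_aux
      rintro u v ⟨h1, h2, h3⟩
      refine ⟨Wd_mono_aux (Nat.le_succ dh) h1, Wd_mono_aux (Nat.le_succ dh) h2, ?_⟩
      rcases h3 with h3 | h3
      · exact Or.inl h3
      · exact Or.inr (Bsq_mono_aux (Wd_mono_aux (Nat.le_succ dh)) h3)
    · show (⊥ : SimpleGraph (Word n)) ≤ _
      exact bot_le
  | succ k ih =>
    intro j
    refine E.mono _ _ _ _ (Wd_mono_aux (by omega)) ?_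
    apply fromRel_mono_aux
    rintro u v ⟨h1, h2, w, hw, hmem⟩
    refine ⟨Wd_mono_aux (by omega) h1, Wd_mono_aux (by omega) h2, w, hw, ?_⟩
    rcases hmem with hL | hR
    · left
      simp only [Set.mem_iUnion] at hL ⊢
      obtain ⟨j', hj'⟩ := hL
      exact ⟨j', gsuppP_mono_aux _ (ih j') hj'⟩
    · exact Or.inr (Bsq_mono_aux (Wd_mono_aux (Nat.le_succ dh)) hR)

/-- the term-sparsity graphs embed when the relaxation order increases:
`G_{d̂,j}^{(k)} ⊆ G_{d̂+1,j}^{(k)}`. -/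
theorem stmt19 {n m : ℕ} (f : NCPoly n) (g : Fin m → NCPoly n)
    (hsym : IsSymNC f) (hgsym : ∀ j, IsSymNC (g j))
    (E : ChordalExt n) (dh k : ℕ) (hdh : minOrder f g ≤ dh) (hk : 1 ≤ k) :
    ∀ j : Fin (m + 1), GseqC E f g dh k j ≤ GseqC E f g (dh + 1) k j := by
  intro j
  exact GseqC_mono_dh E f g dh k j
end
end
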